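/- arXiv:1408.2167 — 10 statements merged into one kernel-verified Lean document; each statement's English description precedes it below -/
import Mathlib

section
/- Let T be a nonempty tree. Then L(T) with the described order is a lattice: the order is a partial order in which every pair of elements has a least upper bound and a greatest lower bound. Explicitly, if σ, τ ∈ T are incomparable (neither is a prefix of the other) and ρ denotes their longest common prefix, then in L(T): the meet of σ and τ (both in the first copy) is ρ, the join of σ and τ is ρ*, the join of σ and τ* is ρ*, and the meet of σ and τ* is ρ; if σ and τ are comparable then the join and meet of σ and τ are the longer and shorter of the two, the join of σ and τ* is τ*, and the meet of σ and τ* is σ. The corresponding formulas for pairs σ*, τ* in the second copy hold dually. -/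
/-- `T` is a tree: a set of finite sequences of natural numbers closed under prefixes. -/
def IsTree (T : Set (List ℕ)) : Prop :=
  ∀ l ∈ T, ∀ l' : List ℕ, l' <+: l → l' ∈ T

/-- `f : ℕ → ℕ` is an infinite path of `T`: every initial segment
`[f 0, f 1, …, f (k-1)]` belongs to `T`. -/
def IsPath (T : Set (List ℕ)) (f : ℕ → ℕ) : Prop :=
  ∀ k : ℕ, (List.range k).map f ∈ T

/-- An upper bound of `A` with respect to the relation `le`. -/
def RelUpperBound {X : Type*} (le : X → X → Prop) (A : Set X) (j : X) : Prop :=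
  ∀ x ∈ A, le x j

/-- A lower bound of `A` with respect to the relation `le`. -/
def RelLowerBound {X : Type*} (le : X → X → Prop) (A : Set X) (m : X) : Prop :=
  ∀ x ∈ A, le m x

/-- `j` is a least upper bound of `A` with respect to the relation `le`. -/
def RelIsLUB {X : Type*} (le : X → X → Prop) (A : Set X) (j : X) : Prop :=
  RelUpperBound le A j ∧ ∀ k, RelUpperBound le A k → le j k

/-- `m` is a greatest lower bound of `A` with respect to the relation `le`. -/
def RelIsGLB {X : Type*} (le : X → X → Prop) (A : Set X) (m : X) : Prop :=
  RelLowerBound le A m ∧ ∀ k, RelLowerBound le A k → le k m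

/-- `c` is a compact element with respect to the relation `le`: whenever `c` is below
the supremum of a set `A`, it is below the supremum of some finite subset of `A`. -/
def RelIsCompact {X : Type*} (le : X → X → Prop) (c : X) : Prop :=
  ∀ (A : Set X) (j : X), RelIsLUB le A j → le c j →
    ∃ A' ⊆ A, A'.Finite ∧ ∃ j' : X, RelIsLUB le A' j' ∧ le c j'

/-- The underlying type of `L(T)`: the disjoint union of two copies of `T`.
`Sum.inl σ` is the element `σ` of the first copy and `Sum.inr σ` is `σ*`. -/
abbrev LTree (T : Set (List ℕ)) : Type := {l : List ℕ // l ∈ T} ⊕ {l : List ℕ // l ∈ T}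

/-- The order on `L(T)`: `σ ≤ τ` iff `σ` is a prefix of `τ`; `σ* ≤ τ*` iff `τ` is a
prefix of `σ`; `σ ≤ τ*` iff `σ` and `τ` are comparable; and never `σ* ≤ τ`. -/
def LTreeLe (T : Set (List ℕ)) : LTree T → LTree T → Prop
  | Sum.inl σ, Sum.inl τ => σ.1 <+: τ.1
  | Sum.inl σ, Sum.inr τ => σ.1 <+: τ.1 ∨ τ.1 <+: σ.1
  | Sum.inr _, Sum.inl _ => False
  | Sum.inr σ, Sum.inr τ => τ.1 <+: σ.1


theorem ltree_le_refl {T : Set (List ℕ)} (x : LTree T) : LTreeLe T x x := by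
  rcases x with σ | σ <;> exact List.prefix_rfl

theorem lub_pair {T : Set (List ℕ)} (x y j : LTree T)
    (h1 : LTreeLe T x j) (h2 : LTreeLe T y j)
    (h3 : ∀ k, LTreeLe T x k → LTreeLe T y k → LTreeLe T j k) :
    RelIsLUB (LTreeLe T) {x, y} j := by
  constructor
  · rintro z (rfl | rfl)
    exacts [h1, h2]
  · intro k hk
    exact h3 k (hk x (by simp)) (hk y (by simp))

theorem glb_pair {T : Set (List ℕ)} (x y m : LTree T)
    (h1 : LTreeLe T m x) (h2 : LTreeLe T m y)
    (h3 : ∀ k, LTreeLe T k x → LTreeLe T k y → LTreeLe T k m) :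
    RelIsGLB (LTreeLe T) {x, y} m := by
  constructor
  · rintro z (rfl | rfl)
    exacts [h1, h2]
  · intro k hk
    exact h3 k (hk x (by simp)) (hk y (by simp))

theorem comp_facts {T : Set (List ℕ)} (σ τ : {l : List ℕ // l ∈ T}) (h : σ.1 <+: τ.1) :
    RelIsLUB (LTreeLe T) {Sum.inl σ, Sum.inl τ} (Sum.inl τ)
    ∧ RelIsGLB (LTreeLe T) {Sum.inl σ, Sum.inl τ} (Sum.inl σ)
    ∧ RelIsLUB (LTreeLe T) {Sum.inl σ, Sum.inr τ} (Sum.inr τ)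
    ∧ RelIsGLB (LTreeLe T) {Sum.inl σ, Sum.inr τ} (Sum.inl σ)
    ∧ RelIsLUB (LTreeLe T) {Sum.inl τ, Sum.inr σ} (Sum.inr σ)
    ∧ RelIsGLB (LTreeLe T) {Sum.inl τ, Sum.inr σ} (Sum.inl τ)
    ∧ RelIsLUB (LTreeLe T) {Sum.inr σ, Sum.inr τ} (Sum.inr σ)
    ∧ RelIsGLB (LTreeLe T) {Sum.inr σ, Sum.inr τ} (Sum.inr τ) :=
  ⟨lub_pair _ _ _ h (ltree_le_refl _) (fun _ _ hy => hy),
   glb_pair _ _ _ (ltree_le_refl _) h (fun _ hx _ => hx),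
   lub_pair _ _ _ (Or.inl h) (ltree_le_refl _) (fun _ _ hy => hy),
   glb_pair _ _ _ (ltree_le_refl _) (Or.inl h) (fun _ hx _ => hx),
   lub_pair _ _ _ (Or.inr h) (ltree_le_refl _) (fun _ _ hy => hy),
   glb_pair _ _ _ (ltree_le_refl _) (Or.inr h) (fun _ hx _ => hx),
   lub_pair _ _ _ (ltree_le_refl _) h (fun _ hx _ => hx),
   glb_pair _ _ _ h (ltree_le_refl _) (fun _ _ hy => hy)⟩

theorem incomp_facts {T : Set (List ℕ)} (σ τ ρ : {l : List ℕ // l ∈ T})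
    (hστ : ¬ σ.1 <+: τ.1 ∧ ¬ τ.1 <+: σ.1)
    (hρ : ρ.1 <+: σ.1 ∧ ρ.1 <+: τ.1 ∧
      ∀ ρ' : List ℕ, ρ' <+: σ.1 → ρ' <+: τ.1 → ρ' <+: ρ.1) :
    RelIsGLB (LTreeLe T) {Sum.inl σ, Sum.inl τ} (Sum.inl ρ)
    ∧ RelIsLUB (LTreeLe T) {Sum.inl σ, Sum.inl τ} (Sum.inr ρ)
    ∧ RelIsLUB (LTreeLe T) {Sum.inl σ, Sum.inr τ} (Sum.inr ρ)
    ∧ RelIsGLB (LTreeLe T) {Sum.inl σ, Sum.inr τ} (Sum.inl ρ)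
    ∧ RelIsLUB (LTreeLe T) {Sum.inr σ, Sum.inr τ} (Sum.inr ρ)
    ∧ RelIsGLB (LTreeLe T) {Sum.inr σ, Sum.inr τ} (Sum.inl ρ) := by
  obtain ⟨h1, h2⟩ := hστ
  obtain ⟨hρ1, hρ2, hρ3⟩ := hρ
  have comp : ∀ π : List ℕ, σ.1 <+: π → τ.1 <+: π → False := fun π ha hb =>
    (List.prefix_or_prefix_of_prefix ha hb).elim h1 h2
  refine ⟨?_, ?_, ?_, ?_, ?_, ?_⟩
  · refine glb_pair _ _ _ hρ1 hρ2 ?_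
    rintro (π | π) hx hy
    · exact hρ3 π.1 hx hy
    · exact hx.elim
  · refine lub_pair _ _ _ (Or.inr hρ1) (Or.inr hρ2) ?_
    rintro (π | π) hx hy
    · exact comp π.1 hx hy
    · rcases hx with hx | hx
      · rcases hy with hy | hy
        · exact absurd (List.prefix_or_prefix_of_prefix hx hy).symm (by tauto)
        · exact absurd (hx.trans hy) h1
      · rcases hy with hy | hy
        · exact absurd (hy.trans hx) h2
        · exact hρ3 π.1 hx hy
  · refine lub_pair _ _ _ (Or.inr hρ1) hρ2 ?_
    rintro (π | π) hx hy
    · exact hy.elim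
    · rcases hx with hx | hx
      · exact absurd (hx.trans hy) h1
      · exact hρ3 π.1 hx hy
  · refine glb_pair _ _ _ hρ1 (Or.inl hρ2) ?_
    rintro (π | π) hx hy
    · rcases hy with hy | hy
      · exact hρ3 π.1 hx hy
      · exact absurd (hy.trans hx) h2
    · exact hx.elim
  · refine lub_pair _ _ _ hρ1 hρ2 ?_
    rintro (π | π) hx hy
    · exact hx.elim
    · exact hρ3 π.1 hx hy
  · refine glb_pair _ _ _ (Or.inl hρ1) (Or.inl hρ2) ?_
    rintro (π | π) hx hy
    · rcases hx with hx | hx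
      · rcases hy with hy | hy
        · exact hρ3 π.1 hx hy
        · exact absurd (hy.trans hx) h2
      · rcases hy with hy | hy
        · exact absurd (hx.trans hy) h1
        · exact (comp π.1 hx hy).elim
    · exact comp π.1 hx hy

def myLcp : List ℕ → List ℕ → List ℕ
  | a :: l, b :: m => if a = b then a :: myLcp l m else []
  | _, _ => []

theorem myLcp_prefix_left : ∀ l m : List ℕ, myLcp l m <+: l
  | [], _ => by simp [myLcp]
  | _ :: _, [] => by simp [myLcp]
  | a :: l, b :: m => by
    by_cases h : a = b
    · simpa [myLcp, h] using myLcp_prefix_left l m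
    · simp [myLcp, h]

theorem myLcp_prefix_right : ∀ l m : List ℕ, myLcp l m <+: m
  | [], _ => by simp [myLcp]
  | _ :: _, [] => by simp [myLcp]
  | a :: l, b :: m => by
    by_cases h : a = b
    · subst h; simpa [myLcp] using myLcp_prefix_right l m
    · simp [myLcp, h]

theorem prefix_myLcp : ∀ p l m : List ℕ, p <+: l → p <+: m → p <+: myLcp l m
  | [], _, _, _, _ => by simp
  | c :: p, [], m, h1, _ => by simp at h1
  | c :: p, a :: l, [], _, h2 => by simp at h2
  | c :: p, a :: l, b :: m, h1, h2 => by
    rw [List.cons_prefix_cons] at h1 h2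
    obtain ⟨rfl, h1⟩ := h1
    obtain ⟨rfl, h2⟩ := h2
    simpa [myLcp, List.cons_prefix_cons] using prefix_myLcp p l m h1 h2

theorem ltree_partialOrder (T : Set (List ℕ)) : IsPartialOrder (LTree T) (LTreeLe T) where
  refl := ltree_le_refl
  trans := by
    rintro (σ | σ) (τ | τ) (υ | υ) hab hbc
    all_goals try exact hab.elim
    all_goals try exact hbc.elim
    all_goals try exact hab.trans hbc
    all_goals try exact hbc.trans hab
    · rcases hbc with h | h
      · exact Or.inl (hab.trans h)
      · exact (List.prefix_or_prefix_of_prefix hab h)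
    · rcases hab with h | h
      · exact List.prefix_or_prefix_of_prefix h hbc
      · exact Or.inr (hbc.trans h)
  antisymm := by
    rintro (σ | σ) (τ | τ) hab hba
    · exact congrArg Sum.inl (Subtype.ext (hab.eq_of_length_le hba.length_le))
    · exact hba.elim
    · exact hab.elim
    · exact congrArg Sum.inr (Subtype.ext (hba.eq_of_length_le hab.length_le))

theorem ltree_lubs (T : Set (List ℕ)) (hT : IsTree T) :
    ∀ x y : LTree T, ∃ j, RelIsLUB (LTreeLe T) {x, y} j := by
  have hmem : ∀ σ τ : {l : List ℕ // l ∈ T}, myLcp σ.1 τ.1 ∈ T :=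
    fun σ τ => hT σ.1 σ.2 _ (myLcp_prefix_left _ _)
  have hρ : ∀ σ τ : {l : List ℕ // l ∈ T},
      (⟨myLcp σ.1 τ.1, hmem σ τ⟩ : {l : List ℕ // l ∈ T}).1 <+: σ.1 ∧
      (myLcp σ.1 τ.1) <+: τ.1 ∧
      ∀ ρ' : List ℕ, ρ' <+: σ.1 → ρ' <+: τ.1 → ρ' <+: myLcp σ.1 τ.1 :=
    fun σ τ => ⟨myLcp_prefix_left _ _, myLcp_prefix_right _ _, fun ρ' => prefix_myLcp ρ' _ _⟩
  rintro (σ | σ) (τ | τ)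
  · by_cases h : σ.1 <+: τ.1
    · exact ⟨_, (comp_facts σ τ h).1⟩
    · by_cases h' : τ.1 <+: σ.1
      · exact ⟨_, Set.pair_comm (Sum.inl σ) (Sum.inl τ) ▸ (comp_facts τ σ h').1⟩
      · exact ⟨_, (incomp_facts σ τ ⟨_, hmem σ τ⟩ ⟨h, h'⟩ (hρ σ τ)).2.1⟩
  · by_cases h : σ.1 <+: τ.1
    · exact ⟨_, (comp_facts σ τ h).2.2.1⟩
    · by_cases h' : τ.1 <+: σ.1
      · exact ⟨_, (comp_facts τ σ h').2.2.2.2.1⟩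
      · exact ⟨_, (incomp_facts σ τ ⟨_, hmem σ τ⟩ ⟨h, h'⟩ (hρ σ τ)).2.2.1⟩
  · by_cases h : τ.1 <+: σ.1
    · exact ⟨_, Set.pair_comm (Sum.inr σ) (Sum.inl τ) ▸ (comp_facts τ σ h).2.2.1⟩
    · by_cases h' : σ.1 <+: τ.1
      · exact ⟨_, Set.pair_comm (Sum.inr σ) (Sum.inl τ) ▸ (comp_facts σ τ h').2.2.2.2.1⟩
      · exact ⟨_, Set.pair_comm (Sum.inr σ) (Sum.inl τ) ▸
          (incomp_facts τ σ ⟨_, hmem τ σ⟩ ⟨h, h'⟩ (hρ τ σ)).2.2.1⟩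
  · by_cases h : σ.1 <+: τ.1
    · exact ⟨_, (comp_facts σ τ h).2.2.2.2.2.2.1⟩
    · by_cases h' : τ.1 <+: σ.1
      · exact ⟨_, Set.pair_comm (Sum.inr σ) (Sum.inr τ) ▸ (comp_facts τ σ h').2.2.2.2.2.2.1⟩
      · exact ⟨_, (incomp_facts σ τ ⟨_, hmem σ τ⟩ ⟨h, h'⟩ (hρ σ τ)).2.2.2.2.1⟩

theorem ltree_glbs (T : Set (List ℕ)) (hT : IsTree T) :
    ∀ x y : LTree T, ∃ m, RelIsGLB (LTreeLe T) {x, y} m := by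
  have hmem : ∀ σ τ : {l : List ℕ // l ∈ T}, myLcp σ.1 τ.1 ∈ T :=
    fun σ τ => hT σ.1 σ.2 _ (myLcp_prefix_left _ _)
  have hρ : ∀ σ τ : {l : List ℕ // l ∈ T},
      (⟨myLcp σ.1 τ.1, hmem σ τ⟩ : {l : List ℕ // l ∈ T}).1 <+: σ.1 ∧
      (myLcp σ.1 τ.1) <+: τ.1 ∧
      ∀ ρ' : List ℕ, ρ' <+: σ.1 → ρ' <+: τ.1 → ρ' <+: myLcp σ.1 τ.1 :=
    fun σ τ => ⟨myLcp_prefix_left _ _, myLcp_prefix_right _ _, fun ρ' => prefix_myLcp ρ' _ _⟩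
  rintro (σ | σ) (τ | τ)
  · by_cases h : σ.1 <+: τ.1
    · exact ⟨_, (comp_facts σ τ h).2.1⟩
    · by_cases h' : τ.1 <+: σ.1
      · exact ⟨_, Set.pair_comm (Sum.inl σ) (Sum.inl τ) ▸ (comp_facts τ σ h').2.1⟩
      · exact ⟨_, (incomp_facts σ τ ⟨_, hmem σ τ⟩ ⟨h, h'⟩ (hρ σ τ)).1⟩
  · by_cases h : σ.1 <+: τ.1
    · exact ⟨_, (comp_facts σ τ h).2.2.2.1⟩
    · by_cases h' : τ.1 <+: σ.1
      · exact ⟨_, (comp_facts τ σ h').2.2.2.2.2.1⟩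
      · exact ⟨_, (incomp_facts σ τ ⟨_, hmem σ τ⟩ ⟨h, h'⟩ (hρ σ τ)).2.2.2.1⟩
  · by_cases h : τ.1 <+: σ.1
    · exact ⟨_, Set.pair_comm (Sum.inr σ) (Sum.inl τ) ▸ (comp_facts τ σ h).2.2.2.1⟩
    · by_cases h' : σ.1 <+: τ.1
      · exact ⟨_, Set.pair_comm (Sum.inr σ) (Sum.inl τ) ▸ (comp_facts σ τ h').2.2.2.2.2.1⟩
      · exact ⟨_, Set.pair_comm (Sum.inr σ) (Sum.inl τ) ▸
          (incomp_facts τ σ ⟨_, hmem τ σ⟩ ⟨h, h'⟩ (hρ τ σ)).2.2.2.1⟩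
  · by_cases h : σ.1 <+: τ.1
    · exact ⟨_, (comp_facts σ τ h).2.2.2.2.2.2.2⟩
    · by_cases h' : τ.1 <+: σ.1
      · exact ⟨_, Set.pair_comm (Sum.inr σ) (Sum.inr τ) ▸ (comp_facts τ σ h').2.2.2.2.2.2.2⟩
      · exact ⟨_, (incomp_facts σ τ ⟨_, hmem σ τ⟩ ⟨h, h'⟩ (hρ σ τ)).2.2.2.2.2⟩

/-- Gr\"atzer–Schmidt paper, Proposition on `L(T)` being a lattice, with the explicit
formulas for joins and meets in terms of longest common prefixes. -/
theorem LTree_isLattice (T : Set (List ℕ)) (hT : IsTree T) (hne : [] ∈ T) :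
    IsPartialOrder (LTree T) (LTreeLe T)
    ∧ (∀ x y : LTree T, ∃ j, RelIsLUB (LTreeLe T) {x, y} j)
    ∧ (∀ x y : LTree T, ∃ m, RelIsGLB (LTreeLe T) {x, y} m)
    ∧ (∀ σ τ ρ : {l : List ℕ // l ∈ T},
        (¬ σ.1 <+: τ.1 ∧ ¬ τ.1 <+: σ.1) →
        (ρ.1 <+: σ.1 ∧ ρ.1 <+: τ.1 ∧
          ∀ ρ' : List ℕ, ρ' <+: σ.1 → ρ' <+: τ.1 → ρ' <+: ρ.1) →
        RelIsGLB (LTreeLe T) {Sum.inl σ, Sum.inl τ} (Sum.inl ρ)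
        ∧ RelIsLUB (LTreeLe T) {Sum.inl σ, Sum.inl τ} (Sum.inr ρ)
        ∧ RelIsLUB (LTreeLe T) {Sum.inl σ, Sum.inr τ} (Sum.inr ρ)
        ∧ RelIsGLB (LTreeLe T) {Sum.inl σ, Sum.inr τ} (Sum.inl ρ)
        ∧ RelIsLUB (LTreeLe T) {Sum.inr σ, Sum.inr τ} (Sum.inr ρ)
        ∧ RelIsGLB (LTreeLe T) {Sum.inr σ, Sum.inr τ} (Sum.inl ρ))
    ∧ (∀ σ τ : {l : List ℕ // l ∈ T}, σ.1 <+: τ.1 →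
        RelIsLUB (LTreeLe T) {Sum.inl σ, Sum.inl τ} (Sum.inl τ)
        ∧ RelIsGLB (LTreeLe T) {Sum.inl σ, Sum.inl τ} (Sum.inl σ)
        ∧ RelIsLUB (LTreeLe T) {Sum.inl σ, Sum.inr τ} (Sum.inr τ)
        ∧ RelIsGLB (LTreeLe T) {Sum.inl σ, Sum.inr τ} (Sum.inl σ)
        ∧ RelIsLUB (LTreeLe T) {Sum.inl τ, Sum.inr σ} (Sum.inr σ)
        ∧ RelIsGLB (LTreeLe T) {Sum.inl τ, Sum.inr σ} (Sum.inl τ)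
        ∧ RelIsLUB (LTreeLe T) {Sum.inr σ, Sum.inr τ} (Sum.inr σ)
        ∧ RelIsGLB (LTreeLe T) {Sum.inr σ, Sum.inr τ} (Sum.inr τ)) :=
  ⟨ltree_partialOrder T, ltree_lubs T hT, ltree_glbs T hT,
   fun σ τ ρ h hρ => incomp_facts σ τ ρ h hρ,
   fun σ τ h => comp_facts σ τ h⟩
end

section
/- Let T be a nonempty tree and suppose f : ℕ → ℕ is an infinite path of T. Then the subset S = { [f 0, f 1, …, f (k−1)] : k ∈ ℕ } of the first copy of T in L(T) has upper bounds in L(T) (namely every element σ* with σ an initial segment of f) but has no least upper bound. In particular, L(T) is not a complete lattice. -/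
private lemma pathPrefix (f : ℕ → ℕ) {m k : ℕ} (h : m ≤ k) :
    (List.range m).map f <+: (List.range k).map f := by
  refine List.IsPrefix.map f ?_
  have ht : List.take m (List.range k) = List.range m := by
    rw [List.take_range, Nat.min_eq_left h]
  exact ht ▸ List.take_prefix m (List.range k)

private lemma pathUniq (f : ℕ → ℕ) {l : List ℕ} {k : ℕ}
    (h : l <+: (List.range k).map f) : l = (List.range l.length).map f := by
  have hlen : l.length ≤ k := by simpa using h.length_le
  have h2 : ((List.range k).map f).take l.length = (List.range l.length).map f := by
    rw [← List.map_take, List.take_range, Nat.min_eq_left hlen]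
  rw [← h2]; exact List.prefix_iff_eq_take.mp h

/-- If `f` is an infinite path of `T`, then the set `S` of initial segments of `f`
(in the first copy of `T`) has upper bounds in `L(T)` — namely every `σ*` with `σ`
an initial segment of `f` — but no least upper bound; in particular `L(T)` is not
a complete lattice. -/
theorem LTree_not_complete_of_path (T : Set (List ℕ)) (hT : IsTree T) (hne : [] ∈ T)
    (f : ℕ → ℕ) (hf : IsPath T f) :
    (∀ (k : ℕ) (h : (List.range k).map f ∈ T),
        RelUpperBound (LTreeLe T)
          (Sum.inl '' {σ : {l : List ℕ // l ∈ T} | ∃ k : ℕ, σ.1 = (List.range k).map f})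
          (Sum.inr ⟨(List.range k).map f, h⟩))
    ∧ (¬ ∃ j : LTree T, RelIsLUB (LTreeLe T)
          (Sum.inl '' {σ : {l : List ℕ // l ∈ T} | ∃ k : ℕ, σ.1 = (List.range k).map f}) j)
    ∧ ¬ (∀ A : Set (LTree T),
          (∃ j, RelIsLUB (LTreeLe T) A j) ∧ (∃ m, RelIsGLB (LTreeLe T) A m)) := by
  set S : Set (LTree T) :=
    Sum.inl '' {σ : {l : List ℕ // l ∈ T} | ∃ k : ℕ, σ.1 = (List.range k).map f} with hS
  have hub : ∀ (k : ℕ) (h : (List.range k).map f ∈ T),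
      RelUpperBound (LTreeLe T) S (Sum.inr ⟨(List.range k).map f, h⟩) := by
    intro k h x hx
    obtain ⟨σ, ⟨m, hm⟩, rfl⟩ := hx
    show σ.1 <+: (List.range k).map f ∨ (List.range k).map f <+: σ.1
    rcases le_total m k with hmk | hmk
    · exact Or.inl (hm ▸ pathPrefix f hmk)
    · exact Or.inr (hm ▸ pathPrefix f hmk)
  have hnolub : ¬ ∃ j : LTree T, RelIsLUB (LTreeLe T) S j := by
    rintro ⟨j, hj1, hj2⟩
    have hmem : ∀ m : ℕ, (Sum.inl ⟨(List.range m).map f, hf m⟩ : LTree T) ∈ S := by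
      intro m; exact ⟨⟨(List.range m).map f, hf m⟩, ⟨m, rfl⟩, rfl⟩
    cases j with
    | inl σ =>
      have := hj1 _ (hmem (σ.1.length + 1))
      have hlen : ((List.range (σ.1.length + 1)).map f).length ≤ σ.1.length :=
        List.IsPrefix.length_le this
      simp at hlen
    | inr σ =>
      have := hj2 (Sum.inr ⟨(List.range (σ.1.length + 1)).map f, hf _⟩)
        (hub (σ.1.length + 1) (hf _))
      have hle : ((List.range (σ.1.length + 1)).map f) <+: σ.1 := this
      have := hle.length_le
      simp at this
  refine ⟨hub, hnolub, fun hall => hnolub ((hall S).1)⟩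
end

section
/- Let T be a nonempty tree with no infinite path. Then every subset of L(T) has a least upper bound and a greatest lower bound; that is, L(T) is a complete lattice. -/
/-- Any nonempty chain inside a well-founded tree has a maximum element. -/
lemma chain_max (T : Set (List ℕ)) (hT : IsTree T)
    (hnopath : ¬ ∃ f : ℕ → ℕ, IsPath T f)
    (S : Set (List ℕ)) (hS : S ⊆ T) (hSne : S.Nonempty)
    (hchain : ∀ a ∈ S, ∀ b ∈ S, a <+: b ∨ b <+: a) :
    ∃ μ ∈ S, ∀ σ ∈ S, σ <+: μ := by
  have agree : ∀ a ∈ S, ∀ b ∈ S, ∀ i : ℕ, ∀ (hia : i < a.length) (hib : i < b.length),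
      a[i] = b[i] := by
    intro a ha b hb i hia hib
    rcases hchain a ha b hb with h | h
    · exact h.getElem hia
    · exact (h.getElem hib).symm
  have hbdd : ∃ N, ∀ l ∈ S, l.length ≤ N := by
    by_contra hb
    push_neg at hb
    choose g hgS hglen using hb
    apply hnopath
    refine ⟨fun n => (g n)[n]'(hglen n), fun k => ?_⟩
    have hkey : (List.range k).map (fun n => (g n)[n]'(hglen n)) = (g k).take k := by
      apply List.ext_getElem
      · simpa using Nat.le_of_lt (hglen k)
      · intro i h1 h2
        have hik : i < k := by simpa using h1
        simp only [List.getElem_map, List.getElem_range, List.getElem_take]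
        exact agree (g i) (hgS i) (g k) (hgS k) i (hglen i) (hik.trans (hglen k))
    rw [hkey]
    exact hT _ (hS (hgS k)) _ (List.take_prefix _ _)
  obtain ⟨N, hN⟩ := hbdd
  have hLne : (List.length '' S).Nonempty := hSne.image _
  have hLb : BddAbove (List.length '' S) := ⟨N, by rintro n ⟨l, hl, rfl⟩; exact hN l hl⟩
  obtain ⟨μ, hμS, hμlen⟩ := Nat.sSup_mem hLne hLb
  refine ⟨μ, hμS, fun σ hσ => ?_⟩
  have hlen : σ.length ≤ μ.length := by
    rw [hμlen]; exact le_csSup hLb ⟨σ, hσ, rfl⟩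
  rcases hchain σ hσ μ hμS with h | h
  · exact h
  · rw [h.eq_of_length_le hlen]

/-- `Sum.swap` reverses the order on `L(T)`. -/
lemma ltree_swap_le {T : Set (List ℕ)} (x y : LTree T) :
    LTreeLe T x y ↔ LTreeLe T (Sum.swap y) (Sum.swap x) := by
  rcases x with σ | σ <;> rcases y with τ | τ <;>
    first | (simp only [Sum.swap_inl, Sum.swap_inr, LTreeLe]; tauto) | simp only [Sum.swap_inl, Sum.swap_inr, LTreeLe]

lemma glb_exists (T : Set (List ℕ)) (hT : IsTree T) (hne : [] ∈ T)
    (hnopath : ¬ ∃ f : ℕ → ℕ, IsPath T f) (A : Set (LTree T)) :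
    ∃ m, RelIsGLB (LTreeLe T) A m := by
  by_cases h1 : (∃ σ : {l // l ∈ T}, Sum.inl σ ∈ A) ∨
      (∃ σ τ : {l // l ∈ T}, Sum.inr σ ∈ A ∧ Sum.inr τ ∈ A ∧
        ¬(σ.1 <+: τ.1 ∨ τ.1 <+: σ.1))
  · -- the GLB lives in the first copy
    have hρ : ∃ ρ : List ℕ,
        (∀ (σ : List ℕ) (hσ : σ ∈ T),
          RelLowerBound (LTreeLe T) A (Sum.inl ⟨σ, hσ⟩) → σ <+: ρ) ∧
        (∀ κ : {l // l ∈ T}, ¬ RelLowerBound (LTreeLe T) A (Sum.inr κ)) := by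
      rcases h1 with ⟨τ₀, hτ₀⟩ | ⟨τ₁, τ₂, h₁, h₂, hinc⟩
      · exact ⟨τ₀.1, fun σ hσ hlb => hlb _ hτ₀, fun κ hκ => hκ _ hτ₀⟩
      · refine ⟨τ₁.1, ?_, ?_⟩
        · intro σ hσ hlb
          have c1 : σ <+: τ₁.1 ∨ τ₁.1 <+: σ := hlb _ h₁
          have c2 : σ <+: τ₂.1 ∨ τ₂.1 <+: σ := hlb _ h₂
          rcases c1 with c1 | c1
          · exact c1
          · exfalso; apply hinc
            rcases c2 with c2 | c2
            · exact Or.inl (c1.trans c2)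
            · rcases le_total τ₁.1.length τ₂.1.length with h | h
              · exact Or.inl (List.prefix_of_prefix_length_le c1 c2 h)
              · exact Or.inr (List.prefix_of_prefix_length_le c2 c1 h)
        · intro κ hκ
          have c1 : τ₁.1 <+: κ.1 := hκ _ h₁
          have c2 : τ₂.1 <+: κ.1 := hκ _ h₂
          apply hinc
          rcases le_total τ₁.1.length τ₂.1.length with h | h
          · exact Or.inl (List.prefix_of_prefix_length_le c1 c2 h)
          · exact Or.inr (List.prefix_of_prefix_length_le c2 c1 h)
    obtain ⟨ρ, hρ1, hρ2⟩ := hρ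
    set LB : Set (List ℕ) :=
      {σ | ∃ h : σ ∈ T, RelLowerBound (LTreeLe T) A (Sum.inl ⟨σ, h⟩)} with hLBdef
    have hLBsub : LB ⊆ T := fun σ hσ => hσ.1
    have hnillb : RelLowerBound (LTreeLe T) A (Sum.inl ⟨[], hne⟩) := by
      intro x hx
      rcases x with τ | τ
      · exact List.nil_prefix
      · exact Or.inl List.nil_prefix
    have hLBne : LB.Nonempty := ⟨[], hne, hnillb⟩
    have hLBρ : ∀ σ ∈ LB, σ <+: ρ := fun σ hσ => hρ1 σ hσ.1 hσ.2
    have hLBchain : ∀ a ∈ LB, ∀ b ∈ LB, a <+: b ∨ b <+: a := by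
      intro a ha b hb
      rcases le_total a.length b.length with h | h
      · exact Or.inl (List.prefix_of_prefix_length_le (hLBρ a ha) (hLBρ b hb) h)
      · exact Or.inr (List.prefix_of_prefix_length_le (hLBρ b hb) (hLBρ a ha) h)
    obtain ⟨μ, hμLB, hμmax⟩ := chain_max T hT hnopath LB hLBsub hLBne hLBchain
    refine ⟨Sum.inl ⟨μ, hμLB.1⟩, ?_, ?_⟩
    · exact hμLB.2
    · intro k hk
      rcases k with κ | κ
      · exact hμmax κ.1 ⟨κ.2, fun x hx => by simpa using hk x hx⟩
      · exact absurd hk (hρ2 κ)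
  · -- all elements are starred and form a chain: GLB in the second copy
    push_neg at h1
    obtain ⟨h1a, h1b⟩ := h1
    set S : Set (List ℕ) := insert [] {l | ∃ h : l ∈ T, Sum.inr ⟨l, h⟩ ∈ A} with hSdef
    have hSsub : S ⊆ T := by
      rintro l (rfl | ⟨h, _⟩)
      · exact hne
      · exact h
    have hSmem : ∀ x ∈ A, ∃ σ : {l // l ∈ T}, x = Sum.inr σ ∧ σ.1 ∈ S := by
      intro x hx
      rcases x with τ | τ
      · exact absurd hx (h1a τ)
      · exact ⟨τ, rfl, Or.inr ⟨τ.2, by simpa using hx⟩⟩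
    have hSchain : ∀ a ∈ S, ∀ b ∈ S, a <+: b ∨ b <+: a := by
      rintro a (rfl | ⟨ha, hA⟩) b hb
      · exact Or.inl List.nil_prefix
      · rcases hb with rfl | ⟨hb, hB⟩
        · exact Or.inr List.nil_prefix
        · exact h1b ⟨a, ha⟩ ⟨b, hb⟩ hA hB
    obtain ⟨μ, hμS, hμmax⟩ := chain_max T hT hnopath S hSsub ⟨[], Or.inl rfl⟩ hSchain
    refine ⟨Sum.inr ⟨μ, hSsub hμS⟩, ?_, ?_⟩
    · intro x hx
      obtain ⟨σ, rfl, hσS⟩ := hSmem x hx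
      exact hμmax σ.1 hσS
    · intro k hk
      rcases k with κ | κ
      · -- κ must be comparable with μ
        rcases hμS with rfl | ⟨h, hA⟩
        · exact Or.inr List.nil_prefix
        · simpa using hk _ hA
      · -- every element of S is a prefix of κ
        rcases hμS with rfl | ⟨h, hA⟩
        · exact List.nil_prefix
        · simpa using hk _ hA

/-- If the nonempty tree `T` has no infinite path, then every subset of `L(T)` has a
least upper bound and a greatest lower bound, i.e. `L(T)` is a complete lattice. -/
theorem LTree_complete_of_no_path (T : Set (List ℕ)) (hT : IsTree T) (hne : [] ∈ T)
    (hnopath : ¬ ∃ f : ℕ → ℕ, IsPath T f) :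
    ∀ A : Set (LTree T),
      (∃ j, RelIsLUB (LTreeLe T) A j) ∧ (∃ m, RelIsGLB (LTreeLe T) A m) := by
  intro A
  constructor
  · obtain ⟨m, hm1, hm2⟩ := glb_exists T hT hne hnopath (Sum.swap '' A)
    refine ⟨Sum.swap m, ?_, ?_⟩
    · intro x hx
      rw [ltree_swap_le, Sum.swap_swap]
      exact hm1 _ ⟨x, hx, rfl⟩
    · intro k hk
      rw [ltree_swap_le, Sum.swap_swap]
      apply hm2
      rintro y ⟨x, hx, rfl⟩
      rw [← ltree_swap_le]
      exact hk x hx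
  · exact glb_exists T hT hne hnopath A
end

section
/- Let T be a nonempty tree. Then every subset of L(T) has a least upper bound and a greatest lower bound (i.e., L(T) is a complete lattice) if and only if T has no infinite path. -/
open Classical in
/-- Among prefixes of `b` satisfying `Q`, there is a longest one (given `Q []`). -/
private lemma bestPrefix (b : List ℕ) (Q : List ℕ → Prop) (hQ0 : Q []) :
    ∃ ρ, ρ <+: b ∧ Q ρ ∧ ∀ ρ', ρ' <+: b → Q ρ' → ρ' <+: ρ := by
  set n := Nat.findGreatest (fun n => Q (b.take n)) b.length with hn
  have hQn : Q (b.take n) :=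
    Nat.findGreatest_spec (P := fun n => Q (b.take n)) (Nat.zero_le _) (by simpa using hQ0)
  refine ⟨b.take n, List.take_prefix n b, hQn, ?_⟩
  intro ρ' hpre hQ'
  have hlen : ρ'.length ≤ b.length := hpre.length_le
  have h1 : ρ' = b.take ρ'.length := List.prefix_iff_eq_take.mp hpre
  have h2 : ρ'.length ≤ n := Nat.le_findGreatest hlen (by rwa [← h1])
  rcases List.prefix_or_prefix_of_prefix hpre (List.take_prefix n b) with h | h
  · exact h
  · have heq : b.take n = ρ' := h.eq_of_length <| le_antisymm h.length_le
      (by simp only [List.length_take]; omega)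
    rw [heq]

open Classical in
/-- A nonempty chain of elements of a well-founded tree has a maximum. -/
private lemma chainMax (T : Set (List ℕ)) (hT : IsTree T)
    (hnp : ¬ ∃ f : ℕ → ℕ, IsPath T f) (S : Set (List ℕ)) (hS : ∀ l ∈ S, l ∈ T)
    (hchain : ∀ a ∈ S, ∀ b ∈ S, a <+: b ∨ b <+: a) (hsne : S.Nonempty) :
    ∃ σ ∈ S, ∀ τ ∈ S, τ <+: σ := by
  have hbdd : ∃ N, ∀ l ∈ S, l.length ≤ N := by
    by_contra hub
    push_neg at hub
    choose g hgS hglen using hub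
    refine hnp ⟨fun n => (g n)[n]'(hglen n), ?_⟩
    intro k
    have hk : (List.range k).map (fun n => (g n)[n]'(hglen n)) = (g k).take k := by
      apply List.ext_getElem
      · simp only [List.length_map, List.length_range, List.length_take]
        have := hglen k
        omega
      · intro i h1 h2
        simp only [List.getElem_map, List.getElem_range, List.getElem_take]
        have hi : i < k := by simpa using h1
        rcases hchain _ (hgS i) _ (hgS k) with h | h
        · exact h.getElem (hglen i)
        · exact (h.getElem (hi.trans (hglen k))).symm
    rw [hk]
    exact hT _ (hS _ (hgS k)) _ (List.take_prefix _ _)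
  obtain ⟨N, hN⟩ := hbdd
  obtain ⟨σ₀, hσ₀⟩ := hsne
  obtain ⟨σ, hσS, hσlen⟩ := Nat.findGreatest_spec (P := fun n => ∃ l ∈ S, l.length = n)
    (hN _ hσ₀) ⟨σ₀, hσ₀, rfl⟩
  refine ⟨σ, hσS, fun τ hτ => ?_⟩
  have hle : τ.length ≤ Nat.findGreatest (fun n => ∃ l ∈ S, l.length = n) N :=
    Nat.le_findGreatest (hN _ hτ) ⟨τ, hτ, rfl⟩
  rcases hchain _ hτ _ hσS with h | h
  · exact h
  · have heq : σ = τ := h.eq_of_length (le_antisymm h.length_le (hσlen ▸ hle))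
    rw [heq]


private lemma exists_lub (T : Set (List ℕ)) (hT : IsTree T) (hne : [] ∈ T)
    (hnp : ¬ ∃ f : ℕ → ℕ, IsPath T f) (A : Set (LTree T)) :
    ∃ j, RelIsLUB (LTreeLe T) A j := by
  by_cases hr : ∃ τ : {l // l ∈ T}, Sum.inr τ ∈ A
  · obtain ⟨τ₀, hτ₀⟩ := hr
    obtain ⟨ρ, hρb, hρQ, hρmax⟩ := bestPrefix τ₀.1
      (fun ρ => (∀ σ : {l // l ∈ T}, Sum.inl σ ∈ A → (σ.1 <+: ρ ∨ ρ <+: σ.1)) ∧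
        (∀ τ : {l // l ∈ T}, Sum.inr τ ∈ A → ρ <+: τ.1))
      ⟨fun σ _ => Or.inr (List.nil_prefix), fun τ _ => List.nil_prefix⟩
    refine ⟨Sum.inr ⟨ρ, hT _ τ₀.2 _ hρb⟩, ?_, ?_⟩
    · rintro (σ | τ) hx
      · exact hρQ.1 σ hx
      · exact hρQ.2 τ hx
    · rintro (ρ' | ρ') hk
      · exact absurd (hk _ hτ₀) not_false
      · exact hρmax ρ'.1 (hk _ hτ₀) ⟨fun σ hσ => hk _ hσ, fun τ hτ => hk _ hτ⟩
  · by_cases hl : ∃ σ : {l // l ∈ T}, Sum.inl σ ∈ A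
    · obtain ⟨σ₁, hσ₁⟩ := hl
      by_cases hch : ∀ σ : {l // l ∈ T}, Sum.inl σ ∈ A → ∀ τ : {l // l ∈ T},
          Sum.inl τ ∈ A → (σ.1 <+: τ.1 ∨ τ.1 <+: σ.1)
      · -- the first-copy elements form a chain; take its maximum
        obtain ⟨σm, hσmS, hmax⟩ := chainMax T hT hnp
          {l | ∃ h : l ∈ T, Sum.inl ⟨l, h⟩ ∈ A}
          (fun l hl => hl.1)
          (fun a ha b hb => hch ⟨a, ha.1⟩ ha.2 ⟨b, hb.1⟩ hb.2)
          ⟨σ₁.1, σ₁.2, hσ₁⟩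
        refine ⟨Sum.inl ⟨σm, hσmS.1⟩, ?_, ?_⟩
        · rintro (σ | τ) hx
          · exact hmax σ.1 ⟨σ.2, hx⟩
          · exact absurd ⟨τ, hx⟩ hr
        · intro k hk
          exact hk _ hσmS.2
      · push_neg at hch
        obtain ⟨τ₁, hτ₁, τ₂, hτ₂, hic1, hic2⟩ := hch
        obtain ⟨ρ, hρb, hρQ, hρmax⟩ := bestPrefix τ₁.1
          (fun ρ => (∀ σ : {l // l ∈ T}, Sum.inl σ ∈ A → (σ.1 <+: ρ ∨ ρ <+: σ.1)) ∧
            (∀ τ : {l // l ∈ T}, Sum.inr τ ∈ A → ρ <+: τ.1))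
          ⟨fun σ _ => Or.inr (List.nil_prefix), fun τ _ => List.nil_prefix⟩
        refine ⟨Sum.inr ⟨ρ, hT _ τ₁.2 _ hρb⟩, ?_, ?_⟩
        · rintro (σ | τ) hx
          · exact hρQ.1 σ hx
          · exact hρQ.2 τ hx
        · rintro (ρ' | ρ') hk
          · -- an upper bound in the first copy would make τ₁, τ₂ comparable
            exact absurd (List.prefix_or_prefix_of_prefix (hk _ hτ₁) (hk _ hτ₂))
              (by rintro (h | h); exacts [hic1 h, hic2 h])
          · -- ρ' must be a prefix of τ₁
            have hρ'1 : ρ'.1 <+: τ₁.1 := by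
              rcases hk _ hτ₁ with h1 | h1
              · rcases hk _ hτ₂ with h2 | h2
                · refine absurd (List.prefix_or_prefix_of_prefix h1 h2)
                    (by rintro (h | h); exacts [hic1 h, hic2 h])
                · exact absurd (h1.trans h2) hic1
              · exact h1
            exact hρmax ρ'.1 hρ'1 ⟨fun σ hσ => hk _ hσ, fun τ hτ => hk _ hτ⟩
    · -- A is empty
      refine ⟨Sum.inl ⟨[], hne⟩, ?_, ?_⟩
      · rintro (σ | τ) hx
        · exact absurd ⟨σ, hx⟩ hl
        · exact absurd ⟨τ, hx⟩ hr
      · rintro (τ | τ) _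
        · exact List.nil_prefix
        · exact Or.inl (List.nil_prefix)

private lemma exists_glb (T : Set (List ℕ)) (hT : IsTree T) (hne : [] ∈ T)
    (hnp : ¬ ∃ f : ℕ → ℕ, IsPath T f) (A : Set (LTree T)) :
    ∃ m, RelIsGLB (LTreeLe T) A m := by
  by_cases hl : ∃ σ : {l // l ∈ T}, Sum.inl σ ∈ A
  · obtain ⟨σ₀, hσ₀⟩ := hl
    obtain ⟨ρ, hρb, hρQ, hρmax⟩ := bestPrefix σ₀.1
      (fun ρ => (∀ σ : {l // l ∈ T}, Sum.inl σ ∈ A → ρ <+: σ.1) ∧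
        (∀ τ : {l // l ∈ T}, Sum.inr τ ∈ A → (ρ <+: τ.1 ∨ τ.1 <+: ρ)))
      ⟨fun σ _ => List.nil_prefix, fun τ _ => Or.inl List.nil_prefix⟩
    refine ⟨Sum.inl ⟨ρ, hT _ σ₀.2 _ hρb⟩, ?_, ?_⟩
    · rintro (σ | τ) hx
      · exact hρQ.1 σ hx
      · exact hρQ.2 τ hx
    · rintro (ρ' | ρ') hk
      · exact hρmax ρ'.1 (hk _ hσ₀) ⟨fun σ hσ => hk _ hσ, fun τ hτ => hk _ hτ⟩
      · exact absurd (hk _ hσ₀) not_false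
  · by_cases hr : ∃ τ : {l // l ∈ T}, Sum.inr τ ∈ A
    · obtain ⟨τ₀, hτ₀⟩ := hr
      by_cases hch : ∀ σ : {l // l ∈ T}, Sum.inr σ ∈ A → ∀ τ : {l // l ∈ T},
          Sum.inr τ ∈ A → (σ.1 <+: τ.1 ∨ τ.1 <+: σ.1)
      · -- the second-copy elements form a chain; its maximum is the glb
        obtain ⟨τm, hτmS, hmax⟩ := chainMax T hT hnp
          {l | ∃ h : l ∈ T, Sum.inr ⟨l, h⟩ ∈ A}
          (fun l hl => hl.1)
          (fun a ha b hb => hch ⟨a, ha.1⟩ ha.2 ⟨b, hb.1⟩ hb.2)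
          ⟨τ₀.1, τ₀.2, hτ₀⟩
        refine ⟨Sum.inr ⟨τm, hτmS.1⟩, ?_, ?_⟩
        · rintro (σ | τ) hx
          · exact absurd ⟨σ, hx⟩ hl
          · exact hmax τ.1 ⟨τ.2, hx⟩
        · intro k hk
          exact hk _ hτmS.2
      · push_neg at hch
        obtain ⟨τ₁, hτ₁, τ₂, hτ₂, hic1, hic2⟩ := hch
        obtain ⟨ρ, hρb, hρQ, hρmax⟩ := bestPrefix τ₁.1
          (fun ρ => (∀ σ : {l // l ∈ T}, Sum.inl σ ∈ A → ρ <+: σ.1) ∧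
            (∀ τ : {l // l ∈ T}, Sum.inr τ ∈ A → (ρ <+: τ.1 ∨ τ.1 <+: ρ)))
          ⟨fun σ _ => List.nil_prefix, fun τ _ => Or.inl List.nil_prefix⟩
        refine ⟨Sum.inl ⟨ρ, hT _ τ₁.2 _ hρb⟩, ?_, ?_⟩
        · rintro (σ | τ) hx
          · exact hρQ.1 σ hx
          · exact hρQ.2 τ hx
        · rintro (ρ' | ρ') hk
          · -- ρ' must be a prefix of τ₁
            have hρ'1 : ρ'.1 <+: τ₁.1 := by
              rcases hk _ hτ₁ with h1 | h1
              · exact h1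
              · rcases hk _ hτ₂ with h2 | h2
                · exact absurd (h1.trans h2) hic1
                · exact absurd (List.prefix_or_prefix_of_prefix h1 h2)
                    (by rintro (h | h); exacts [hic1 h, hic2 h])
            exact hρmax ρ'.1 hρ'1 ⟨fun σ hσ => hk _ hσ, fun τ hτ => hk _ hτ⟩
          · -- a lower bound in the second copy would make τ₁, τ₂ comparable
            exact absurd (List.prefix_or_prefix_of_prefix (hk _ hτ₁) (hk _ hτ₂))
              (by rintro (h | h); exacts [hic1 h, hic2 h])
    · -- A is empty
      refine ⟨Sum.inr ⟨[], hne⟩, ?_, ?_⟩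
      · rintro (σ | τ) hx
        · exact absurd ⟨σ, hx⟩ hl
        · exact absurd ⟨τ, hx⟩ hr
      · rintro (τ | τ) _
        · exact Or.inr List.nil_prefix
        · exact List.nil_prefix

/-- `L(T)` is a complete lattice (every subset has a least upper bound and a greatest
lower bound) if and only if `T` has no infinite path. -/
theorem LTree_complete_iff_no_path (T : Set (List ℕ)) (hT : IsTree T) (hne : [] ∈ T) :
    (∀ A : Set (LTree T),
        (∃ j, RelIsLUB (LTreeLe T) A j) ∧ (∃ m, RelIsGLB (LTreeLe T) A m)) ↔
      ¬ ∃ f : ℕ → ℕ, IsPath T f := by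
  constructor
  · rintro hcomp ⟨f, hf⟩
    -- the prefixes in the first copy have no least upper bound
    set p : ℕ → LTree T := fun n => Sum.inl ⟨(List.range n).map f, hf n⟩ with hp
    have hpre : ∀ {k n : ℕ}, k ≤ n → (List.range k).map f <+: (List.range n).map f := by
      intro k n hkn
      have : ((List.range n).map f).take k = (List.range k).map f := by
        rw [← List.map_take, List.take_range, min_eq_left hkn]
      exact this ▸ List.take_prefix _ _
    obtain ⟨⟨j, hjUB, hjL⟩, -⟩ := hcomp (Set.range p)
    have hlenrm : ∀ n : ℕ, ((List.range n).map f).length = n := by simp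
    cases j with
    | inl ρ =>
      have h := hjUB (p (ρ.1.length + 1)) ⟨_, rfl⟩
      have := h.length_le
      rw [hlenrm] at this
      omega
    | inr ρ =>
      have hUBn : RelUpperBound (LTreeLe T) (Set.range p)
          (Sum.inr ⟨(List.range (ρ.1.length + 1)).map f, hf _⟩) := by
        rintro x ⟨k, rfl⟩
        rcases le_total k (ρ.1.length + 1) with h | h
        · exact Or.inl (hpre h)
        · exact Or.inr (hpre h)
      have h := hjL _ hUBn
      have := h.length_le
      rw [hlenrm] at this
      omega
  · intro hnp A
    exact ⟨exists_lub T hT hne hnp A, exists_glb T hT hne hnp A⟩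
end

section
/- Let (T_n)_{n ∈ ℕ} be a family of nonempty trees. Then the poset L built from this family is a complete lattice: the described relation is a partial order and every subset of L has a least upper bound and a greatest lower bound. -/
/-- The underlying type of the lattice `L` built from a family of trees `(T n)`:
a least element `bot`, a greatest element `top`, an element `a n` for each `n`,
and an element `node n σ` for each `n` and `σ ∈ T n`. -/
inductive BigL (T : ℕ → Set (List ℕ)) : Type
  | bot : BigL T
  | top : BigL T
  | a (n : ℕ) : BigL T
  | node (n : ℕ) (σ : {l : List ℕ // l ∈ T n}) : BigL T

/-- The order on `BigL T`: `bot ≤ x ≤ top` for all `x`; `node n σ ≤ node m τ` iff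
`n = m` and `σ` is a prefix of `τ`; `node n σ ≤ a m` iff `n = m`; and no other
inequalities hold. -/
def BigLe {T : ℕ → Set (List ℕ)} : BigL T → BigL T → Prop
  | BigL.bot, _ => True
  | _, BigL.top => True
  | BigL.a n, BigL.a m => n = m
  | BigL.node n σ, BigL.node m τ => n = m ∧ σ.1 <+: τ.1
  | BigL.node n _, BigL.a m => n = m
  | _, _ => False

section BigLAux
variable {T : ℕ → Set (List ℕ)}

lemma BigLe.refl' (x : BigL T) : BigLe x x := by cases x <;> simp [BigLe]

lemma BigLe.le_top' (x : BigL T) : BigLe x BigL.top := by cases x <;> trivial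

lemma BigLe.bot_le' (x : BigL T) : BigLe BigL.bot x := by cases x <;> trivial

lemma BigLe.trans' (x y z : BigL T) (h1 : BigLe x y) (h2 : BigLe y z) : BigLe x z := by
  cases x <;> cases y <;> cases z <;> simp only [BigLe] at h1 h2 ⊢ <;>
    first
      | trivial
      | exact h1.elim
      | exact h2.elim
      | exact h1.trans h2
      | exact ⟨h1.1.trans h2.1, h1.2.trans h2.2⟩
      | exact h1.1.trans h2

lemma BigLe.antisymm' (x y : BigL T) (h1 : BigLe x y) (h2 : BigLe y x) : x = y := by
  cases x <;> cases y <;> simp only [BigLe] at h1 h2 ⊢ <;>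
    first
      | rfl
      | exact h1.elim
      | exact h2.elim
      | exact congrArg _ h1
      | exact congrArg _ h1.symm
      | { obtain ⟨rfl, hp⟩ := h1
          obtain ⟨-, hq⟩ := h2
          exact congrArg _ (Subtype.ext (hp.eq_of_length_le hq.length_le)) }

lemma nat_greatest (s : Set ℕ) (h : s.Nonempty) (b : ℕ) (hb : ∀ x ∈ s, x ≤ b) :
    ∃ m ∈ s, ∀ x ∈ s, x ≤ m := by
  induction b with
  | zero =>
    obtain ⟨x, hx⟩ := h
    exact ⟨x, hx, fun y hy => (hb y hy).trans (Nat.zero_le x)⟩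
  | succ b ih =>
    by_cases hbs : b + 1 ∈ s
    · exact ⟨b + 1, hbs, hb⟩
    · apply ih
      intro x hx
      have h1 := hb x hx
      have h2 : x ≠ b + 1 := fun e => hbs (e ▸ hx)
      omega

/-- index of an element, if any -/
def BigLidx : BigL T → Option ℕ
  | BigL.a n => some n
  | BigL.node n _ => some n
  | _ => none

lemma eq_top_of_two_idx {x y k : BigL T} {n m : ℕ} (hx : BigLidx x = some n)
    (hy : BigLidx y = some m) (hnm : n ≠ m) (h1 : BigLe x k) (h2 : BigLe y k) :
    k = BigL.top := by
  cases x <;> cases y <;> cases k <;>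
    simp only [BigLidx, BigLe, Option.some.injEq, reduceCtorEq] at hx hy h1 h2 <;>
    (try obtain ⟨h1, -⟩ := h1) <;> (try obtain ⟨h2, -⟩ := h2) <;>
    first
      | rfl
      | exact h1.elim
      | exact h2.elim
      | omega

lemma BigL_exists_lub (A : Set (BigL T)) : ∃ j, RelIsLUB BigLe A j := by
  by_cases htop : BigL.top ∈ A
  · exact ⟨BigL.top, fun x _ => BigLe.le_top' x, fun k hk => hk _ htop⟩
  by_cases hdiff : ∃ x ∈ A, ∃ y ∈ A, ∃ n m : ℕ, BigLidx x = some n ∧ BigLidx y = some m ∧ n ≠ m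
  · refine ⟨BigL.top, fun x _ => BigLe.le_top' x, ?_⟩
    intro k hk
    obtain ⟨x, hx, y, hy, n, m, hxn, hym, hnm⟩ := hdiff
    have := eq_top_of_two_idx hxn hym hnm (hk x hx) (hk y hy)
    subst this
    exact BigLe.refl' _
  -- from now on, all indexed elements of A share one index
  have hsame : ∀ x ∈ A, ∀ y ∈ A, ∀ n m : ℕ, BigLidx x = some n → BigLidx y = some m → n = m := by
    intro x hx y hy n m hxn hym
    by_contra hne
    exact hdiff ⟨x, hx, y, hy, n, m, hxn, hym, hne⟩
  by_cases ha : ∃ n, BigL.a n ∈ A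
  · obtain ⟨n, hn⟩ := ha
    refine ⟨BigL.a n, ?_, fun k hk => hk _ hn⟩
    intro x hx
    cases x with
    | bot => trivial
    | top => exact absurd hx htop
    | a m => exact hsame _ hx _ hn m n rfl rfl
    | node m σ => exact hsame _ hx _ hn m n rfl rfl
  by_cases hnode : ∃ n σ, BigL.node n σ ∈ A
  · obtain ⟨n, σ0, h0⟩ := hnode
    have hA : ∀ x ∈ A, x = BigL.bot ∨ ∃ σ, x = BigL.node n σ := by
      intro x hx
      cases x with
      | bot => exact Or.inl rfl
      | top => exact absurd hx htop
      | a m => exact absurd ⟨m, hx⟩ ha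
      | node m σ =>
        have : m = n := hsame _ hx _ h0 m n rfl rfl
        subst this
        exact Or.inr ⟨σ, rfl⟩
    by_cases hmax : ∃ σ : {l : List ℕ // l ∈ T n}, BigL.node n σ ∈ A ∧
        ∀ τ : {l : List ℕ // l ∈ T n}, BigL.node n τ ∈ A → τ.1 <+: σ.1
    · obtain ⟨σ, hσA, hσ⟩ := hmax
      refine ⟨BigL.node n σ, ?_, fun k hk => hk _ hσA⟩
      intro x hx
      rcases hA x hx with rfl | ⟨τ, rfl⟩
      · trivial
      · exact ⟨rfl, hσ τ hx⟩
    · refine ⟨BigL.a n, ?_, ?_⟩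
      · intro x hx
        rcases hA x hx with rfl | ⟨τ, rfl⟩
        · trivial
        · exact rfl
      · intro k hk
        cases k with
        | top => trivial
        | bot => exact (hk _ h0).elim
        | a m => exact (hk _ h0 : n = m)
        | node m τ =>
          exfalso
          obtain ⟨rfl, -⟩ := (hk _ h0 : n = m ∧ _)
          apply hmax
          obtain ⟨L, hL, hLmax⟩ := nat_greatest
            {k : ℕ | ∃ σ : {l : List ℕ // l ∈ T n}, BigL.node n σ ∈ A ∧ σ.1.length = k}
            ⟨σ0.1.length, σ0, h0, rfl⟩ τ.1.length
            (by rintro x ⟨σ, hσ, rfl⟩; exact (hk _ hσ).2.length_le)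
          obtain ⟨σm, hσm, hσlen⟩ := hL
          refine ⟨σm, hσm, fun ρ hρ => ?_⟩
          have h1 : ρ.1 <+: τ.1 := (hk _ hρ).2
          have h2 : σm.1 <+: τ.1 := (hk _ hσm).2
          have h3 : ρ.1.length ≤ σm.1.length := hσlen ▸ hLmax _ ⟨ρ, hρ, rfl⟩
          exact List.prefix_of_prefix_length_le h1 h2 h3
  · -- A ⊆ {bot}
    refine ⟨BigL.bot, ?_, fun k _ => BigLe.bot_le' k⟩
    intro x hx
    cases x with
    | bot => trivial
    | top => exact absurd hx htop
    | a m => exact absurd ⟨m, hx⟩ ha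
    | node m σ => exact absurd ⟨m, σ, hx⟩ hnode

lemma BigL_exists_glb (A : Set (BigL T)) : ∃ m, RelIsGLB BigLe A m := by
  obtain ⟨j, hub, hlub⟩ := BigL_exists_lub {x : BigL T | ∀ a ∈ A, BigLe x a}
  refine ⟨j, ?_, fun k hk => hub k hk⟩
  intro a ha
  exact hlub a (fun x hx => hx a ha)

end BigLAux

/-- The poset `L` built from a family of nonempty trees is a complete lattice. -/
theorem BigL_completeLattice (T : ℕ → Set (List ℕ))
    (hT : ∀ n, IsTree (T n)) (hne : ∀ n, [] ∈ T n) :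
    IsPartialOrder (BigL T) BigLe
    ∧ ∀ A : Set (BigL T), (∃ j, RelIsLUB BigLe A j) ∧ (∃ m, RelIsGLB BigLe A m) := by
  refine ⟨{ refl := BigLe.refl', trans := BigLe.trans', antisymm := BigLe.antisymm' },
    fun A => ⟨BigL_exists_lub A, BigL_exists_glb A⟩⟩
end

section
/- Let (T_n)_{n ∈ ℕ} be a family of nonempty trees and let L be the complete lattice built from this family. For each n, the element a_n is a compact element of L if and only if T_n has no infinite path. -/
namespace BigLAux

variable {T : ℕ → Set (List ℕ)}

lemma le_top (x : BigL T) : BigLe x BigL.top := by cases x <;> trivial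

/-- index of an element -/
def idx : BigL T → Option ℕ
  | BigL.bot => none
  | BigL.top => none
  | BigL.a m => some m
  | BigL.node m _ => some m

lemma idx_le {x y : BigL T} {p : ℕ} (hx : idx x = some p) (h : BigLe x y) :
    y = BigL.top ∨ idx y = some p := by
  cases x <;> cases y <;> simp_all [BigLe, idx]

/-- length of an element -/
def len : BigL T → ℕ
  | BigL.node _ σ => σ.1.length
  | _ => 0

lemma path_of_unbounded_chain {Tn : Set (List ℕ)} (hTn : IsTree Tn)
    (S : Set (List ℕ)) (hS : S ⊆ Tn)
    (hchain : ∀ a ∈ S, ∀ b ∈ S, a <+: b ∨ b <+: a)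
    (hub : ∀ N : ℕ, ∃ l ∈ S, N ≤ l.length) :
    ∃ f : ℕ → ℕ, IsPath Tn f := by
  choose g hgS hglen using hub
  refine ⟨fun k => (g (k+1)).getD k 0, ?_⟩
  intro k
  have key : (List.range k).map (fun k => (g (k+1)).getD k 0) = (g k).take k := by
    apply List.ext_getElem
    · simp [Nat.min_eq_left (hglen k)]
    · intro i h1 h2
      simp only [List.getElem_map, List.getElem_range, List.getElem_take]
      have hi : i < k := by simpa using h1
      have hi1 : i < (g (i+1)).length := lt_of_lt_of_le (Nat.lt_succ_self i) (hglen (i+1))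
      have hik : i < (g k).length := lt_of_lt_of_le hi (hglen k)
      rw [List.getD_eq_getElem _ _ hi1]
      rcases hchain _ (hgS (i+1)) _ (hgS k) with h | h
      · exact h.getElem hi1
      · exact (h.getElem hik).symm
  rw [key]
  exact hTn _ (hS (hgS k)) _ (List.take_prefix _ _)

end BigLAux

open BigLAux in
/-- In the complete lattice `L` built from a family of nonempty trees `(T n)`,
the element `a n` is compact if and only if `T n` has no infinite path. -/
theorem BigL_a_compact_iff_no_path (T : ℕ → Set (List ℕ))
    (hT : ∀ n, IsTree (T n)) (hne : ∀ n, [] ∈ T n) (n : ℕ) :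
    RelIsCompact (BigLe (T := T)) (BigL.a n) ↔ ¬ ∃ f : ℕ → ℕ, IsPath (T n) f := by
  constructor
  · rintro hc ⟨f, hf⟩
    set g : ℕ → BigL T := fun k => BigL.node n ⟨(List.range k).map f, hf k⟩ with hg
    have hub : RelIsLUB BigLe (Set.range g) (BigL.a n) := by
      constructor
      · rintro x ⟨k, rfl⟩; exact rfl
      · intro k hk
        have h0 := hk _ ⟨0, rfl⟩
        cases k with
        | bot => exact absurd h0 (by simp [hg, BigLe])
        | top => trivial
        | a m => exact h0
        | node m τ =>
          exfalso
          obtain ⟨-, h2⟩ := hk _ ⟨τ.1.length + 1, rfl⟩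
          have := h2.length_le
          simp at this
    obtain ⟨A', hsub, hfin, j', hj', hle'⟩ := hc (Set.range g) _ hub rfl
    cases j' with
    | bot => exact absurd hle' (by simp [BigLe])
    | node m τ => exact absurd hle' (by simp [BigLe])
    | top =>
      have : BigLe (BigL.top : BigL T) (BigL.a n) :=
        hj'.2 _ (fun x hx => hub.1 x (hsub hx))
      exact (by simpa [BigLe] using this)
    | a m =>
      have hmn : n = m := hle'
      subst hmn
      rcases Set.eq_empty_or_nonempty A' with rfl | hA'ne
      · have : BigLe (BigL.a n : BigL T) BigL.bot := hj'.2 _ (fun x hx => absurd hx (by simp))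
        exact (by simpa [BigLe] using this)
      · obtain ⟨x, hx, hmax⟩ : ∃ x ∈ A', ∀ x' ∈ A', len x ≤ len x' → len x = len x' := by
          obtain ⟨x, hx, hm⟩ := Set.Finite.exists_maximalFor len A' hfin hA'ne
          exact ⟨x, hx, fun y hy h => le_antisymm h (hm hy h)⟩
        obtain ⟨k', rfl⟩ := hsub hx
        have hub' : RelUpperBound BigLe A' (g k') := by
          intro y hy
          obtain ⟨k, rfl⟩ := hsub hy
          have hlen : len (g k) ≤ len (g k') := by
            rcases le_total (len (g k')) (len (g k)) with h | h
            · exact le_of_eq (hmax _ hy h).symm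
            · exact h
          have hkk' : k ≤ k' := by simpa [hg, len] using hlen
          refine ⟨rfl, ?_⟩
          have heq : (List.range k).map f = ((List.range k').map f).take k := by
            rw [← List.map_take, List.take_range, Nat.min_eq_left hkk']
          show (List.range k).map f <+: (List.range k').map f
          rw [heq]
          exact List.take_prefix _ _
        have : BigLe (BigL.a n : BigL T) (g k') := hj'.2 _ hub'
        exact (by simpa [hg, BigLe] using this)
  · intro hnp A j hLUB hle
    cases j with
    | bot => exact absurd hle (by simp [BigLe])
    | node m τ => exact absurd hle (by simp [BigLe])
    | top =>
      by_cases htop : (BigL.top : BigL T) ∈ A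
      · exact ⟨{BigL.top}, by simpa using htop, Set.finite_singleton _, BigL.top,
          ⟨fun x _ => le_top x, fun k hk => hk _ rfl⟩, trivial⟩
      · by_cases h2 : ∃ x ∈ A, ∃ y ∈ A, ∃ p q, idx x = some p ∧ idx y = some q ∧ p ≠ q
        · obtain ⟨x, hx, y, hy, p, q, hpx, hqy, hpq⟩ := h2
          refine ⟨{x, y}, ?_, (Set.finite_singleton y).insert x, BigL.top,
            ⟨fun z _ => le_top z, ?_⟩, trivial⟩
          · rintro z (rfl | rfl) <;> assumption
          · intro k hk
            have h1 := hk x (Set.mem_insert _ _)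
            have h2' := hk y (Set.mem_insert_of_mem _ rfl)
            rcases idx_le hpx h1 with rfl | hkp
            · trivial
            · rcases idx_le hqy h2' with rfl | hkq
              · trivial
              · exact absurd (Option.some_injective _ (hkp.symm.trans hkq)) hpq
        · exfalso
          push_neg at h2
          by_cases hA : ∃ x ∈ A, ∃ p, idx x = some p
          · obtain ⟨x, hx, p, hp⟩ := hA
            have hub' : RelUpperBound BigLe A (BigL.a p) := by
              intro y hy
              cases y with
              | bot => trivial
              | top => exact absurd hy htop
              | a m => exact h2 _ hy x hx m p rfl hp
              | node m σ => exact h2 _ hy x hx m p rfl hp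
            have : BigLe (BigL.top : BigL T) (BigL.a p) := hLUB.2 _ hub'
            exact (by simpa [BigLe] using this)
          · push_neg at hA
            have hub' : RelUpperBound BigLe A BigL.bot := by
              intro y hy
              cases y with
              | bot => trivial
              | top => exact absurd hy htop
              | a m => exact absurd rfl (hA _ hy m)
              | node m σ => exact absurd rfl (hA _ hy m)
            have : BigLe (BigL.top : BigL T) BigL.bot := hLUB.2 _ hub'
            exact (by simpa [BigLe] using this)
    | a m =>
      have hmn : n = m := hle
      subst hmn
      by_cases han : (BigL.a n : BigL T) ∈ A
      · exact ⟨{BigL.a n}, by simpa using han, Set.finite_singleton _, BigL.a n,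
          ⟨fun x hx => by rcases hx with rfl; exact rfl, fun k hk => hk _ rfl⟩, rfl⟩
      · have hAsub : ∀ x ∈ A, x = BigL.bot ∨ ∃ σ, x = BigL.node n σ := by
          intro x hx
          have hxle := hLUB.1 x hx
          cases x with
          | bot => exact Or.inl rfl
          | top => exact absurd hxle (by simp [BigLe])
          | a m' =>
            have : m' = n := hxle
            subst this
            exact absurd hx han
          | node m' σ =>
            have : m' = n := hxle
            subst this
            exact Or.inr ⟨σ, rfl⟩
        set S : Set (List ℕ) :=
          {l | ∃ h : l ∈ T n, BigL.node n ⟨l, h⟩ ∈ A} with hSdef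
        by_cases hinc : ∃ σ ∈ S, ∃ τ ∈ S, ¬ σ <+: τ ∧ ¬ τ <+: σ
        · obtain ⟨σ, ⟨hσT, hσA⟩, τ, ⟨hτT, hτA⟩, hst, hts⟩ := hinc
          refine ⟨{BigL.node n ⟨σ, hσT⟩, BigL.node n ⟨τ, hτT⟩}, ?_,
            (Set.finite_singleton _).insert _, BigL.a n, ⟨?_, ?_⟩, rfl⟩
          · rintro z (rfl | rfl) <;> assumption
          · rintro z (rfl | rfl) <;> exact rfl
          · intro k hk
            have h1 := hk _ (Set.mem_insert _ _)
            have h2 := hk _ (Set.mem_insert_of_mem _ rfl)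
            cases k with
            | bot => exact absurd h1 (by simp [BigLe])
            | top => trivial
            | a m' => exact h1
            | node m' ρ =>
              exfalso
              obtain ⟨-, hp1⟩ := h1
              obtain ⟨-, hp2⟩ := h2
              rcases List.prefix_or_prefix_of_prefix hp1 hp2 with h | h
              · exact hst h
              · exact hts h
        · exfalso
          push_neg at hinc
          have hchain : ∀ a ∈ S, ∀ b ∈ S, a <+: b ∨ b <+: a := by
            intro a ha b hb
            by_contra hcon
            push_neg at hcon
            exact hcon.2 (hinc a ha b hb hcon.1)
          by_cases hubd : ∀ N : ℕ, ∃ l ∈ S, N ≤ l.length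
          · exact hnp (path_of_unbounded_chain (hT n) S (fun l hl => hl.1) hchain hubd)
          · push_neg at hubd
            rcases Set.eq_empty_or_nonempty S with hSe | hSne
            · have hub' : RelUpperBound BigLe A BigL.bot := by
                intro y hy
                rcases hAsub y hy with rfl | ⟨σ, rfl⟩
                · trivial
                · exact absurd (show σ.1 ∈ S from ⟨σ.2, by simpa using hy⟩)
                    (by simp [hSe])
              have : BigLe (BigL.a n : BigL T) BigL.bot := hLUB.2 _ hub'
              exact (by simpa [BigLe] using this)
            · obtain ⟨N, hN⟩ := hubd
              have hLne : (List.length '' S).Nonempty := hSne.image _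
              have hLbdd : BddAbove (List.length '' S) := by
                refine ⟨N, ?_⟩
                rintro m ⟨l, hl, rfl⟩
                exact (hN l hl).le
              obtain ⟨l0, hl0S, hl0len⟩ := Nat.sSup_mem hLne hLbdd
              have hmaxlen : ∀ l ∈ S, l.length ≤ l0.length := by
                intro l hl
                rw [hl0len]
                exact le_csSup hLbdd ⟨l, hl, rfl⟩
              have hub' : RelUpperBound BigLe A (BigL.node n ⟨l0, hl0S.1⟩) := by
                intro y hy
                rcases hAsub y hy with rfl | ⟨σ, rfl⟩
                · trivial
                · have hσS : σ.1 ∈ S := ⟨σ.2, by simpa using hy⟩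
                  refine ⟨rfl, ?_⟩
                  rcases hchain _ hσS _ hl0S with h | h
                  · exact h
                  · exact (h.eq_of_length_le (hmaxlen _ hσS)) ▸ List.prefix_refl _
              have : BigLe (BigL.a n : BigL T) (BigL.node n ⟨l0, hl0S.1⟩) := hLUB.2 _ hub'
              exact (by simpa [BigLe] using this)
end

section
/- Let T be a nonempty tree. Then the poset T[a] is a complete lattice: the described relation is a partial order and every subset of T[a] has a least upper bound and a greatest lower bound. In particular, any infinite subset of T[a] not containing 1 whose supremum is not a or an element of T has supremum 1. -/
/-- The underlying type of the lattice `T[a]`: the elements of `T` together with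
three additional elements `0`, `a`, `1`. -/
inductive TreeA (T : Set (List ℕ)) : Type
  | bot : TreeA T
  | top : TreeA T
  | a : TreeA T
  | node (σ : {l : List ℕ // l ∈ T}) : TreeA T

/-- The order on `T[a]`: `bot` is least, `top` is greatest, `node σ ≤ node τ` iff
`σ` is a prefix of `τ`, and `a` is incomparable with every element of `T`. -/
def TreeALe {T : Set (List ℕ)} : TreeA T → TreeA T → Prop
  | TreeA.bot, _ => True
  | _, TreeA.top => True
  | TreeA.a, TreeA.a => True
  | TreeA.node σ, TreeA.node τ => σ.1 <+: τ.1
  | _, _ => False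

/-- `T[a]` is a complete lattice; in particular, any infinite subset of `T[a]` not
containing `1` whose supremum is not `a` or an element of `T` has supremum `1`. -/
theorem TreeA_completeLattice (T : Set (List ℕ)) (hT : IsTree T) (hne : [] ∈ T) :
    IsPartialOrder (TreeA T) TreeALe
    ∧ (∀ A : Set (TreeA T), (∃ j, RelIsLUB TreeALe A j) ∧ (∃ m, RelIsGLB TreeALe A m))
    ∧ (∀ A : Set (TreeA T), A.Infinite → TreeA.top ∉ A →
        ∀ j : TreeA T, RelIsLUB TreeALe A j → j ≠ TreeA.a →
          (∀ σ : {l : List ℕ // l ∈ T}, j ≠ TreeA.node σ) → j = TreeA.top) := by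
  have lub : ∀ A : Set (TreeA T), ∃ j, RelIsLUB TreeALe A j := by
    intro A
    by_cases htop : TreeA.top ∈ A
    · exact ⟨TreeA.top, fun x _ => by cases x <;> simp [TreeALe],
        fun k hk => hk _ htop⟩
    by_cases hnode : ∃ σ, TreeA.node σ ∈ A
    · by_cases ha : TreeA.a ∈ A
      · refine ⟨TreeA.top, fun x _ => by cases x <;> simp [TreeALe], ?_⟩
        intro k hk
        obtain ⟨σ, hσ⟩ := hnode
        have h1 := hk _ ha
        have h2 := hk _ hσ
        cases k <;> simp_all [TreeALe]
      · by_cases hmax : ∃ μ, TreeA.node μ ∈ A ∧ ∀ σ, TreeA.node σ ∈ A → σ.1 <+: μ.1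
        · obtain ⟨μ, hμA, hμ⟩ := hmax
          refine ⟨TreeA.node μ, ?_, fun k hk => hk _ hμA⟩
          intro x hx
          cases x with
          | bot => simp [TreeALe]
          | top => exact absurd hx htop
          | a => exact absurd hx ha
          | node σ => exact hμ σ hx
        · refine ⟨TreeA.top, fun x _ => by cases x <;> simp [TreeALe], ?_⟩
          intro k hk
          obtain ⟨σ₀, hσ₀⟩ := hnode
          cases k with
          | top => simp [TreeALe]
          | bot => exact absurd (hk _ hσ₀) (by simp [TreeALe])
          | a => exact absurd (hk _ hσ₀) (by simp [TreeALe])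
          | node τ =>
            exfalso; apply hmax
            set S : Set ℕ := {n | ∃ σ, TreeA.node σ ∈ A ∧ σ.1.length = n} with hS
            have hSne : S.Nonempty := ⟨σ₀.1.length, σ₀, hσ₀, rfl⟩
            have hSbdd : BddAbove S := ⟨τ.1.length, by
              rintro n ⟨σ, hσ, rfl⟩
              exact List.IsPrefix.length_le (hk _ hσ)⟩
            obtain ⟨μ, hμA, hμlen⟩ := Nat.sSup_mem hSne hSbdd
            refine ⟨μ, hμA, fun σ hσ => ?_⟩
            have hle : σ.1.length ≤ μ.1.length := by
              rw [hμlen]; exact le_csSup hSbdd ⟨σ, hσ, rfl⟩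
            exact List.prefix_of_prefix_length_le (hk _ hσ) (hk _ hμA) hle
    · by_cases ha : TreeA.a ∈ A
      · refine ⟨TreeA.a, ?_, ?_⟩
        · intro x hx
          cases x with
          | a => simp [TreeALe]
          | bot => simp [TreeALe]
          | top => exact absurd hx htop
          | node σ => exact absurd ⟨σ, hx⟩ hnode
        · intro k hk
          have := hk _ ha
          cases k <;> simp_all [TreeALe]
      · refine ⟨TreeA.bot, ?_, fun k _ => by simp [TreeALe]⟩
        intro x hx
        cases x with
        | bot => simp [TreeALe]
        | top => exact absurd hx htop
        | a => exact absurd hx ha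
        | node σ => exact absurd ⟨σ, hx⟩ hnode
  refine ⟨?_, ?_, ?_⟩
  · refine { refl := ?_, trans := ?_, antisymm := ?_ }
    · intro x; cases x <;> simp [TreeALe]
    · intro x y z hxy hyz
      cases x <;> cases y <;> cases z <;> simp_all [TreeALe]
      exact hxy.trans hyz
    · intro x y hxy hyx
      cases x <;> cases y <;> simp_all [TreeALe]
      exact Subtype.ext (hxy.sublist.antisymm hyx.sublist)
  · intro A
    refine ⟨lub A, ?_⟩
    obtain ⟨m, hm⟩ := lub {x | RelLowerBound TreeALe A x}
    refine ⟨m, ?_, fun k hk => hm.1 k hk⟩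
    intro x hx
    exact hm.2 x (fun y hy => hy x hx)
  · intro A hinf htopA j hj hja hjnode
    cases j with
    | top => rfl
    | a => exact absurd rfl hja
    | node σ => exact absurd rfl (hjnode σ)
    | bot =>
      exfalso
      have hsub : A ⊆ {TreeA.bot} := by
        intro x hx
        have := hj.1 x hx
        cases x <;> simp_all [TreeALe]
      exact hinf ((Set.finite_singleton _).subset hsub)
end

section
/- Let T be a nonempty tree and consider the complete lattice T[a]. The element a is a compact element of T[a] if and only if T has no infinite path. -/

private lemma initSeg_prefix (f : ℕ → ℕ) {m n : ℕ} (h : m ≤ n) :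
    (List.range m).map f <+: (List.range n).map f := by
  have : ((List.range n).map f).take m = (List.range m).map f := by
    rw [← List.map_take, List.take_range, min_eq_left h]
  rw [← this]; exact List.take_prefix _ _

/-- From an unbounded prefix-chain inside `T` one gets an infinite path. -/
private lemma path_of_unbounded_chain (T : Set (List ℕ)) (hT : IsTree T)
    (S : Set (List ℕ)) (hS : S ⊆ T)
    (hchain : ∀ l₁ ∈ S, ∀ l₂ ∈ S, l₁ <+: l₂ ∨ l₂ <+: l₁)
    (hub : ∀ K : ℕ, ∃ l ∈ S, K ≤ l.length) :
    ∃ f : ℕ → ℕ, IsPath T f := by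
  choose L hLS hLlen using hub
  refine ⟨fun n => (L (n+1)).getD n 0, ?_⟩
  intro k
  have key : (List.range k).map (fun n => (L (n+1)).getD n 0) = (L k).take k := by
    apply List.ext_getElem
    · simp [min_eq_left (hLlen k)]
    · intro i h1 h2
      simp only [List.getElem_map, List.getElem_range, List.getElem_take]
      have hik : i < k := by simpa using h1
      have hi1 : i < (L (i+1)).length := lt_of_lt_of_le (Nat.lt_succ_self i) (hLlen (i+1))
      have hik' : i < (L k).length := lt_of_lt_of_le hik (hLlen k)
      rw [List.getD_eq_getElem _ _ hi1]
      rcases hchain _ (hLS (i+1)) _ (hLS k) with h | h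
      · exact h.getElem hi1
      · exact (h.getElem hik').symm
  rw [key]
  exact hT _ (hS (hLS k)) _ (List.take_prefix _ _)

/-- In the complete lattice `T[a]`, the element `a` is compact if and only if the
tree `T` has no infinite path. -/
theorem TreeA_a_compact_iff_no_path (T : Set (List ℕ)) (hT : IsTree T) (hne : [] ∈ T) :
    RelIsCompact (TreeALe (T := T)) TreeA.a ↔ ¬ ∃ f : ℕ → ℕ, IsPath T f := by
  constructor
  · -- compact → no infinite path
    intro hc hpath
    obtain ⟨f, hf⟩ := hpath
    set A : Set (TreeA T) :=
      {x | ∃ k : ℕ, x = TreeA.node ⟨(List.range k).map f, hf k⟩} with hA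
    have hLUB : RelIsLUB (TreeALe (T := T)) A TreeA.top := by
      constructor
      · intro x _; cases x <;> trivial
      · intro k hk
        cases k with
        | top => trivial
        | bot => exact hk (TreeA.node ⟨(List.range 0).map f, hf 0⟩) ⟨0, rfl⟩
        | a => exact hk (TreeA.node ⟨(List.range 0).map f, hf 0⟩) ⟨0, rfl⟩
        | node τ =>
          have h := hk _ ⟨τ.1.length + 1, rfl⟩
          have hlen := List.IsPrefix.length_le h
          simp at hlen
    obtain ⟨A', hA'A, hA'fin, j', hj', haj'⟩ := hc A TreeA.top hLUB trivial
    cases j' with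
    | bot => exact haj'
    | node τ => exact haj'
    | a =>
      have hempty : A' = ∅ := by
        ext x
        simp only [Set.mem_empty_iff_false, iff_false]
        intro hx
        obtain ⟨k, rfl⟩ := hA'A hx
        exact hj'.1 _ hx
      have := hj'.2 TreeA.bot (by intro x hx; rw [hempty] at hx; exact absurd hx (Set.notMem_empty x))
      exact this
    | top =>
      -- find a node upper bound of A'
      classical
      set s := hA'fin.toFinset with hs
      set len : TreeA T → ℕ := fun x => match x with
        | TreeA.node σ => σ.1.length | _ => 0 with hlen
      set K := s.sup len with hK
      have hub : RelUpperBound (TreeALe (T := T)) A'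
          (TreeA.node ⟨(List.range K).map f, hf K⟩) := by
        intro x hx
        obtain ⟨k, rfl⟩ := hA'A hx
        show (List.range k).map f <+: (List.range K).map f
        apply initSeg_prefix
        have : len (TreeA.node ⟨(List.range k).map f, hf k⟩) ≤ K :=
          Finset.le_sup (by rw [hs]; exact hA'fin.mem_toFinset.mpr hx)
        simpa [hlen] using this
      exact hj'.2 _ hub
  · -- no infinite path → compact
    intro hnp
    intro A j hj haj
    cases j with
    | bot => exact absurd haj (by simp [TreeALe])
    | node τ => exact absurd haj (by simp [TreeALe])
    | a =>
      refine ⟨A, le_refl _, ?_, TreeA.a, hj, trivial⟩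
      apply Set.Finite.subset ((Set.finite_singleton TreeA.a).insert TreeA.bot)
      intro x hx
      have := hj.1 x hx
      cases x with
      | bot => simp
      | a => simp
      | top => exact absurd this (by simp [TreeALe])
      | node σ => exact absurd this (by simp [TreeALe])
    | top =>
      by_cases htop : TreeA.top ∈ A
      · refine ⟨{TreeA.top}, by simpa using htop, Set.finite_singleton _, TreeA.top, ⟨?_, ?_⟩, trivial⟩
        · intro x hx; cases x <;> trivial
        · intro k hk; exact hk _ rfl
      · by_cases ha : TreeA.a ∈ A
        · by_cases hnode : ∃ σ, TreeA.node σ ∈ A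
          · obtain ⟨σ, hσ⟩ := hnode
            refine ⟨{TreeA.a, TreeA.node σ}, ?_, (Set.finite_singleton _).insert _,
              TreeA.top, ⟨fun x _ => by cases x <;> trivial, ?_⟩, trivial⟩
            · intro x hx
              rcases hx with rfl | rfl
              · exact ha
              · exact hσ
            · intro k hk
              have h1 := hk TreeA.a (by simp)
              have h2 := hk (TreeA.node σ) (by simp)
              cases k with
              | top => trivial
              | bot => exact h1
              | a => exact h2
              | node τ => exact h1
          · exfalso
            have : RelUpperBound (TreeALe (T := T)) A TreeA.a := by
              intro x hx
              cases x with
              | bot => trivial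
              | a => trivial
              | top => exact htop hx
              | node σ => exact hnode ⟨σ, hx⟩
            exact hj.2 _ this
        · -- A consists of bot and nodes
          set S : Set (List ℕ) := {l | ∃ h : l ∈ T, TreeA.node ⟨l, h⟩ ∈ A} with hS
          by_cases hchain : ∀ l₁ ∈ S, ∀ l₂ ∈ S, l₁ <+: l₂ ∨ l₂ <+: l₁
          · by_cases hbd : ∃ K : ℕ, ∀ l ∈ S, l.length ≤ K
            · exfalso
              by_cases hSne : S.Nonempty
              · -- chain with bounded lengths has a maximum
                obtain ⟨K, hK⟩ := hbd
                obtain ⟨l₀, hl₀⟩ := hSne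
                classical
                have hex : ∃ n, ∃ l ∈ S, l.length = n := ⟨l₀.length, l₀, hl₀, rfl⟩
                set N := Nat.findGreatest (fun n => ∃ l ∈ S, l.length = n) K with hN
                have hNspec : ∃ l ∈ S, l.length = N :=
                  Nat.findGreatest_spec (P := fun n => ∃ l ∈ S, l.length = n)
                    (hK _ hl₀) ⟨l₀, hl₀, rfl⟩
                obtain ⟨m, hmS, hmlen⟩ := hNspec
                have hmax : ∀ l ∈ S, l <+: m := by
                  intro l hl
                  rcases hchain l hl m hmS with h | h
                  · exact h
                  · have hle : m.length ≤ l.length := h.length_le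
                    have : l.length ≤ N := by
                      rw [hN]
                      exact Nat.le_findGreatest (hK _ hl) ⟨l, hl, rfl⟩
                    have : l.length = m.length := by omega
                    rw [h.eq_of_length this.symm]
                obtain ⟨hmT, hmA⟩ := hmS
                have : RelUpperBound (TreeALe (T := T)) A (TreeA.node ⟨m, hmT⟩) := by
                  intro x hx
                  cases x with
                  | bot => trivial
                  | top => exact absurd hx htop
                  | a => exact absurd hx ha
                  | node σ => exact hmax σ.1 ⟨σ.2, by simpa using hx⟩
                exact hj.2 _ this
              · have : RelUpperBound (TreeALe (T := T)) A TreeA.bot := by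
                  intro x hx
                  cases x with
                  | bot => trivial
                  | top => exact absurd hx htop
                  | a => exact absurd hx ha
                  | node σ => exact absurd ⟨σ.2, (by simpa using hx)⟩ (fun h => hSne ⟨σ.1, h⟩)
                exact absurd (hj.2 _ this) (by simp [TreeALe])
            · exfalso
              apply hnp
              apply path_of_unbounded_chain T hT S (fun l hl => hl.1) hchain
              push_neg at hbd
              intro K
              obtain ⟨l, hl, h⟩ := hbd K
              exact ⟨l, hl, le_of_lt h⟩
          · push_neg at hchain
            obtain ⟨l₁, hl₁, l₂, hl₂, h12, h21⟩ := hchain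
            refine ⟨{TreeA.node ⟨l₁, hl₁.1⟩, TreeA.node ⟨l₂, hl₂.1⟩}, ?_,
              (Set.finite_singleton _).insert _, TreeA.top, ⟨fun x _ => by cases x <;> trivial, ?_⟩, trivial⟩
            · intro x hx
              rcases hx with rfl | rfl
              · exact hl₁.2
              · exact hl₂.2
            · intro k hk
              have h1 := hk _ (by simp : TreeA.node ⟨l₁, hl₁.1⟩ ∈ _)
              have h2 := hk _ (by simp [Set.mem_insert_iff] : TreeA.node ⟨l₂, hl₂.1⟩ ∈ _)
              cases k with
              | top => trivial
              | bot => exact h1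
              | a => exact h1
              | node τ =>
                rcases List.prefix_or_prefix_of_prefix h1 h2 with h | h
                · exact absurd h h12
                · exact absurd h h21
end

section
/- Let T be a nonempty tree with no infinite path. Then every element of the complete lattice T[a] is compact; in particular T[a] is compactly generated (every element is the supremum of the compact elements below it). -/
section Helpers

variable {T : Set (List ℕ)}

lemma treeALe_refl (x : TreeA T) : TreeALe x x := by
  cases x with
  | bot => trivial
  | top => trivial
  | a => trivial
  | node σ => exact List.prefix_refl _

lemma treeALe_le_top (x : TreeA T) : TreeALe x TreeA.top := by
  cases x <;> trivial

lemma treeALe_bot_le (x : TreeA T) : TreeALe TreeA.bot x := by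
  cases x <;> trivial

/-- Any nonempty chain in a tree with no infinite path has a maximum. -/
lemma chain_max_s11 (hT : IsTree T) (hnopath : ¬ ∃ f : ℕ → ℕ, IsPath T f)
    (C : Set (List ℕ)) (hCT : C ⊆ T) (hCne : C.Nonempty)
    (hchain : ∀ l ∈ C, ∀ l' ∈ C, l <+: l' ∨ l' <+: l) :
    ∃ m ∈ C, ∀ l ∈ C, l <+: m := by
  classical
  by_cases hbdd : ∃ n, ∀ l ∈ C, l.length ≤ n
  · obtain ⟨n, hn⟩ := hbdd
    have hS : (List.length '' C).Nonempty := hCne.image _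
    have hbdd' : BddAbove (List.length '' C) := ⟨n, by rintro _ ⟨l, hl, rfl⟩; exact hn l hl⟩
    obtain ⟨m, hmC, hmlen⟩ : ∃ m ∈ C, m.length = sSup (List.length '' C) :=
      Nat.sSup_mem hS hbdd'
    refine ⟨m, hmC, fun l hl => ?_⟩
    rcases hchain l hl m hmC with h | h
    · exact h
    · have hlen : l.length ≤ m.length := by
        rw [hmlen]; exact le_csSup hbdd' ⟨l, hl, rfl⟩
      rw [List.IsPrefix.eq_of_length_le h hlen]
  · push_neg at hbdd
    exfalso
    apply hnopath
    have key : ∀ n : ℕ, ∃ l ∈ C, n < l.length := by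
      intro n
      obtain ⟨l, hl, hlen⟩ := hbdd n
      exact ⟨l, hl, by omega⟩
    set f : ℕ → ℕ := fun n => ((key n).choose).getD n 0 with hf
    refine ⟨f, fun k => ?_⟩
    obtain ⟨l, hlC, hlk⟩ := key k
    have heq : (List.range k).map f = l.take k := by
      apply List.ext_getElem
      · simp [Nat.le_of_lt hlk]
      · intro i h1 h2
        simp only [List.getElem_map, List.getElem_range, List.getElem_take]
        have h1' : i < k := by simpa using h1
        obtain ⟨hC', hlen'⟩ := (key i).choose_spec
        have hi_l : i < l.length := lt_of_lt_of_le h1' (le_of_lt hlk)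
        have hfi : f i = ((key i).choose)[i] := List.getD_eq_getElem _ _ hlen'
        rw [hfi]
        rcases hchain _ hC' l hlC with h | h
        · exact List.IsPrefix.getElem h hlen'
        · exact (List.IsPrefix.getElem h hi_l).symm
    rw [heq]
    exact hT l (hCT hlC) _ (List.take_prefix k l)

/-- If `top` is the LUB of `A`, some finite subset of `A` already has LUB `top`. -/
lemma exists_finite_top (hT : IsTree T) (hnopath : ¬ ∃ f : ℕ → ℕ, IsPath T f)
    (A : Set (TreeA T)) (hLUB : RelIsLUB (TreeALe (T := T)) A TreeA.top) :
    ∃ A' ⊆ A, A'.Finite ∧ RelIsLUB (TreeALe (T := T)) A' TreeA.top := by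
  classical
  by_cases htop : TreeA.top ∈ A
  · refine ⟨{TreeA.top}, by simpa, Set.finite_singleton _, fun x _ => treeALe_le_top x,
      fun k hk => hk _ rfl⟩
  by_cases ha : TreeA.a ∈ A
  · have hnode : ∃ σ, TreeA.node σ ∈ A := by
      by_contra h
      push_neg at h
      have hub : RelUpperBound (TreeALe (T := T)) A TreeA.a := by
        intro x hx
        cases x with
        | bot => trivial
        | a => trivial
        | top => exact (htop hx).elim
        | node σ => exact (h σ hx).elim
      exact hLUB.2 _ hub
    obtain ⟨σ, hσ⟩ := hnode
    refine ⟨{TreeA.a, TreeA.node σ}, ?_, (Set.finite_singleton _).insert _,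
      fun x _ => treeALe_le_top x, ?_⟩
    · rintro x (rfl | rfl) <;> assumption
    · intro k hk
      have h1 := hk TreeA.a (Or.inl rfl)
      have h2 := hk (TreeA.node σ) (Or.inr rfl)
      cases k with
      | top => trivial
      | bot => exact h1.elim
      | a => exact h2.elim
      | node τ => exact h1.elim
  · set C : Set (List ℕ) := {l | ∃ h : l ∈ T, TreeA.node ⟨l, h⟩ ∈ A} with hC
    have hCT : C ⊆ T := fun l hl => hl.choose
    have hCne : C.Nonempty := by
      by_contra hCe
      rw [Set.not_nonempty_iff_eq_empty] at hCe
      have hub : RelUpperBound (TreeALe (T := T)) A TreeA.bot := by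
        intro x hx
        cases x with
        | bot => trivial
        | top => exact (htop hx).elim
        | a => exact (ha hx).elim
        | node σ =>
          exact absurd (show σ.1 ∈ C from ⟨σ.2, hx⟩) (by rw [hCe]; exact Set.notMem_empty _)
      exact hLUB.2 _ hub
    by_cases hchain : ∀ l ∈ C, ∀ l' ∈ C, l <+: l' ∨ l' <+: l
    · exfalso
      obtain ⟨m, hmC, hmax⟩ := chain_max_s11 hT hnopath C hCT hCne hchain
      have hub : RelUpperBound (TreeALe (T := T)) A (TreeA.node ⟨m, hmC.choose⟩) := by
        intro x hx
        cases x with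
        | bot => trivial
        | top => exact (htop hx).elim
        | a => exact (ha hx).elim
        | node σ => exact hmax σ.1 ⟨σ.2, hx⟩
      exact hLUB.2 _ hub
    · push_neg at hchain
      obtain ⟨l, hl, l', hl', hc1, hc2⟩ := hchain
      obtain ⟨hlT, hlA⟩ := hl
      obtain ⟨hl'T, hl'A⟩ := hl'
      refine ⟨{TreeA.node ⟨l, hlT⟩, TreeA.node ⟨l', hl'T⟩}, ?_,
        (Set.finite_singleton _).insert _, fun x _ => treeALe_le_top x, ?_⟩
      · rintro x (rfl | rfl) <;> assumption
      · intro k hk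
        have h1 := hk _ (Or.inl rfl)
        have h2 := hk _ (Or.inr rfl)
        cases k with
        | top => trivial
        | bot => exact h1.elim
        | a => exact h1.elim
        | node τ =>
          rcases List.prefix_or_prefix_of_prefix h1 h2 with h | h
          · exact (hc1 h).elim
          · exact (hc2 h).elim

end Helpers

/-- If the nonempty tree `T` has no infinite path, then every element of the complete
lattice `T[a]` is compact; in particular `T[a]` is compactly generated: every element
is the supremum of the compact elements below it. -/
theorem TreeA_compactlyGenerated_of_no_path (T : Set (List ℕ)) (hT : IsTree T)
    (hne : [] ∈ T) (hnopath : ¬ ∃ f : ℕ → ℕ, IsPath T f) :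
    (∀ x : TreeA T, RelIsCompact (TreeALe (T := T)) x)
    ∧ (∀ x : TreeA T,
        RelIsLUB TreeALe {c : TreeA T | RelIsCompact (TreeALe (T := T)) c ∧ TreeALe c x} x) := by
  classical
  have hcompact : ∀ x : TreeA T, RelIsCompact (TreeALe (T := T)) x := by
    intro c A j hLUB hcj
    cases c with
    | bot =>
      refine ⟨∅, Set.empty_subset _, Set.finite_empty, TreeA.bot, ⟨?_, ?_⟩, trivial⟩
      · intro x hx; exact absurd hx (Set.notMem_empty x)
      · intro k _; exact treeALe_bot_le k
    | top =>
      cases j with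
      | top =>
        obtain ⟨A', hA, hfin, hlub⟩ := exists_finite_top hT hnopath A hLUB
        exact ⟨A', hA, hfin, TreeA.top, hlub, trivial⟩
      | bot => exact hcj.elim
      | a => exact hcj.elim
      | node τ => exact hcj.elim
    | a =>
      cases j with
      | top =>
        obtain ⟨A', hA, hfin, hlub⟩ := exists_finite_top hT hnopath A hLUB
        exact ⟨A', hA, hfin, TreeA.top, hlub, trivial⟩
      | bot => exact hcj.elim
      | node τ => exact hcj.elim
      | a =>
        have haA : TreeA.a ∈ A := by
          by_contra haA
          have hub : RelUpperBound (TreeALe (T := T)) A TreeA.bot := by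
            intro x hx
            have hx' := hLUB.1 x hx
            cases x with
            | bot => trivial
            | top => exact hx'.elim
            | a => exact (haA hx).elim
            | node σ => exact hx'.elim
          exact hLUB.2 _ hub
        refine ⟨{TreeA.a}, by simpa, Set.finite_singleton _, TreeA.a,
          ⟨fun x hx => by rw [hx]; exact treeALe_refl _, fun k hk => hk _ rfl⟩, trivial⟩
    | node σ =>
      cases j with
      | bot => exact hcj.elim
      | a => exact hcj.elim
      | top =>
        obtain ⟨A', hA, hfin, hlub⟩ := exists_finite_top hT hnopath A hLUB
        exact ⟨A', hA, hfin, TreeA.top, hlub, trivial⟩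
      | node τ =>
        have hτA : TreeA.node τ ∈ A := by
          set C : Set (List ℕ) := {l | ∃ h : l ∈ T, TreeA.node ⟨l, h⟩ ∈ A} with hC
          have hchain : ∀ l ∈ C, ∀ l' ∈ C, l <+: l' ∨ l' <+: l := by
            intro l hl l' hl'
            have h1 : l <+: τ.1 := hLUB.1 _ hl.choose_spec
            have h2 : l' <+: τ.1 := hLUB.1 _ hl'.choose_spec
            exact List.prefix_or_prefix_of_prefix h1 h2
          have hCne : C.Nonempty := by
            by_contra hCe
            rw [Set.not_nonempty_iff_eq_empty] at hCe
            have hub : RelUpperBound (TreeALe (T := T)) A TreeA.bot := by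
              intro x hx
              have hx' := hLUB.1 x hx
              cases x with
              | bot => trivial
              | top => exact hx'.elim
              | a => exact hx'.elim
              | node ρ =>
                refine absurd (show ρ.1 ∈ C from ⟨ρ.2, hx⟩) ?_
                rw [hCe]; exact Set.notMem_empty _
            exact hLUB.2 _ hub
          obtain ⟨m, hmC, hmax⟩ := chain_max_s11 hT hnopath C (fun l hl => hl.choose) hCne hchain
          have hub : RelUpperBound (TreeALe (T := T)) A (TreeA.node ⟨m, hmC.choose⟩) := by
            intro x hx
            have hx' := hLUB.1 x hx
            cases x with
            | bot => trivial
            | top => exact hx'.elim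
            | a => exact hx'.elim
            | node ρ => exact hmax ρ.1 ⟨ρ.2, hx⟩
          have h1 : τ.1 <+: m := hLUB.2 _ hub
          have h2 : m <+: τ.1 := hLUB.1 _ hmC.choose_spec
          have hmτ : m = τ.1 := List.IsPrefix.eq_of_length_le h2 h1.length_le
          have : TreeA.node τ = TreeA.node ⟨m, hmC.choose⟩ := by
            congr 1
            exact Subtype.ext hmτ.symm
          rw [this]
          exact hmC.choose_spec
        refine ⟨{TreeA.node τ}, by simpa, Set.finite_singleton _, TreeA.node τ,
          ⟨fun x hx => by rw [hx]; exact treeALe_refl _, fun k hk => hk _ rfl⟩, hcj⟩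
  exact ⟨hcompact, fun x => ⟨fun c hc => hc.2, fun k hk => hk x ⟨hcompact x, treeALe_refl x⟩⟩⟩
end

section
/- Let T be a nonempty tree. The complete lattice T[a] is compactly generated (equivalently, since T[a] is always complete, T[a] is an algebraic lattice) if and only if T has no infinite path. -/
namespace TreeAProof

variable {T : Set (List ℕ)}

lemma le_top' (x : TreeA T) : TreeALe x TreeA.top := by cases x <;> trivial

lemma le_refl' (x : TreeA T) : TreeALe x x := by
  cases x with
  | node σ => exact List.prefix_refl _
  | _ => trivial

lemma of_top_le {x : TreeA T} (h : TreeALe TreeA.top x) : x = TreeA.top := by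
  cases x with
  | top => rfl
  | bot => exact h.elim
  | a => exact h.elim
  | node σ => exact h.elim

lemma of_le_bot {x : TreeA T} (h : TreeALe x TreeA.bot) : x = TreeA.bot := by
  cases x with
  | bot => rfl
  | top => exact h.elim
  | a => exact h.elim
  | node σ => exact h.elim

lemma of_le_a {x : TreeA T} (h : TreeALe x TreeA.a) : x = TreeA.bot ∨ x = TreeA.a := by
  cases x with
  | bot => exact Or.inl rfl
  | a => exact Or.inr rfl
  | top => exact h.elim
  | node σ => exact h.elim

lemma of_a_le {x : TreeA T} (h : TreeALe TreeA.a x) : x = TreeA.a ∨ x = TreeA.top := by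
  cases x with
  | a => exact Or.inl rfl
  | top => exact Or.inr rfl
  | bot => exact h.elim
  | node σ => exact h.elim

lemma of_le_node {x : TreeA T} {τ : {l : List ℕ // l ∈ T}} (h : TreeALe x (TreeA.node τ)) :
    x = TreeA.bot ∨ ∃ σ, x = TreeA.node σ ∧ σ.1 <+: τ.1 := by
  cases x with
  | bot => exact Or.inl rfl
  | node σ => exact Or.inr ⟨σ, rfl, h⟩
  | top => exact h.elim
  | a => exact h.elim

lemma below_finite (j : TreeA T) (hj : j ≠ TreeA.top) : {y : TreeA T | TreeALe y j}.Finite := by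
  cases j with
  | top => exact absurd rfl hj
  | bot =>
    refine Set.Finite.subset (Set.finite_singleton TreeA.bot) ?_
    intro y hy; exact of_le_bot hy
  | a =>
    refine Set.Finite.subset (Set.Finite.insert TreeA.bot (Set.finite_singleton TreeA.a)) ?_
    intro y hy
    rcases of_le_a hy with rfl | rfl
    · exact Set.mem_insert _ _
    · exact Set.mem_insert_of_mem _ rfl
  | node τ =>
    have h0 : {l : List ℕ | l <+: τ.1}.Finite := by
      refine Set.Finite.subset (τ.1.inits.finite_toSet) ?_
      intro l hl
      simpa [List.mem_inits] using hl
    have h1 : {σ : {l : List ℕ // l ∈ T} | σ.1 <+: τ.1}.Finite := by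
      have : {σ : {l : List ℕ // l ∈ T} | σ.1 <+: τ.1}
          = Subtype.val ⁻¹' {l : List ℕ | l <+: τ.1} := rfl
      rw [this]
      exact Set.Finite.preimage Subtype.val_injective.injOn h0
    refine Set.Finite.subset ((h1.image TreeA.node).insert TreeA.bot) ?_
    intro y hy
    rcases of_le_node hy with rfl | ⟨σ, rfl, hσ⟩
    · exact Set.mem_insert _ _
    · exact Set.mem_insert_of_mem _ ⟨σ, hσ, rfl⟩

lemma path_of_chain (hT : IsTree T) (S : Set (List ℕ)) (hS : S ⊆ T)
    (hch : ∀ l ∈ S, ∀ l' ∈ S, l <+: l' ∨ l' <+: l) (hinf : S.Infinite) :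
    ∃ f : ℕ → ℕ, IsPath T f := by
  have hlen : ∀ n : ℕ, ∃ l ∈ S, n < l.length := by
    intro n
    have himg : (List.length '' S).Infinite := by
      refine Set.Infinite.image ?_ hinf
      intro l hl l' hl' he
      rcases hch l hl l' hl' with h | h
      · exact h.eq_of_length he
      · exact (h.eq_of_length he.symm).symm
    obtain ⟨m, ⟨l, hl, rfl⟩, hm⟩ := himg.exists_gt n
    exact ⟨l, hl, hm⟩
  choose L hLS hLlen using hlen
  refine ⟨fun n => (L n)[n]'(hLlen n), ?_⟩
  intro k
  have hk : (List.range k).map (fun n => (L n)[n]'(hLlen n)) = (L k).take k := by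
    apply List.ext_getElem
    · have := hLlen k
      simp [List.length_take]
      omega
    · intro n h1 h2
      simp only [List.getElem_map, List.getElem_range, List.getElem_take]
      have hn : n < k := by simpa using h1
      rcases hch (L n) (hLS n) (L k) (hLS k) with h | h
      · exact h.getElem (hLlen n)
      · exact (h.getElem (lt_trans hn (hLlen k))).symm
  rw [hk]
  exact hT (L k) (hS (hLS k)) _ (List.take_prefix k (L k))

lemma of_node_le' {σ : {l : List ℕ // l ∈ T}} {x : TreeA T}
    (h : TreeALe (TreeA.node σ) x) : x = TreeA.top ∨ ∃ τ, x = TreeA.node τ ∧ σ.1 <+: τ.1 := by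
  cases x with
  | top => exact Or.inl rfl
  | node τ => exact Or.inr ⟨τ, rfl, h⟩
  | bot => exact h.elim
  | a => exact h.elim


lemma top_lub_finite (hT : IsTree T) (hnp : ¬ ∃ f : ℕ → ℕ, IsPath T f)
    (A : Set (TreeA T)) (hA : RelIsLUB TreeALe A TreeA.top) :
    ∃ A' ⊆ A, A'.Finite ∧ RelIsLUB TreeALe A' TreeA.top := by
  by_cases htop : TreeA.top ∈ A
  · refine ⟨{TreeA.top}, by simpa using htop, Set.finite_singleton _, ?_⟩
    refine ⟨fun x _ => le_top' x, fun k hk => hk _ rfl⟩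
  by_cases hpair : ∃ σ τ : {l : List ℕ // l ∈ T},
      TreeA.node σ ∈ A ∧ TreeA.node τ ∈ A ∧ ¬ σ.1 <+: τ.1 ∧ ¬ τ.1 <+: σ.1
  · obtain ⟨σ, τ, hσ, hτ, h1, h2⟩ := hpair
    refine ⟨{TreeA.node σ, TreeA.node τ}, ?_, (Set.finite_singleton _).insert _, ?_⟩
    · intro x hx; rcases hx with rfl | rfl <;> assumption
    refine ⟨fun x _ => le_top' x, fun k hk => ?_⟩
    have hkσ := hk _ (Set.mem_insert _ _)
    have hkτ := hk _ (Set.mem_insert_of_mem _ rfl)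
    rcases of_node_le' hkσ with rfl | ⟨υ, rfl, hσυ⟩
    · exact le_refl' _
    · exfalso
      have hτυ : τ.1 <+: υ.1 := hkτ
      rcases le_or_gt σ.1.length τ.1.length with hle | hlt
      · exact h1 (List.prefix_of_prefix_length_le hσυ hτυ hle)
      · exact h2 (List.prefix_of_prefix_length_le hτυ hσυ (le_of_lt hlt))
  by_cases ha : TreeA.a ∈ A
  · by_cases hnode : ∃ ρ : {l : List ℕ // l ∈ T}, TreeA.node ρ ∈ A
    · obtain ⟨ρ, hρ⟩ := hnode
      refine ⟨{TreeA.a, TreeA.node ρ}, ?_, (Set.finite_singleton _).insert _, ?_⟩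
      · intro x hx; rcases hx with rfl | rfl <;> assumption
      refine ⟨fun x _ => le_top' x, fun k hk => ?_⟩
      have h1 := hk _ (Set.mem_insert _ _)
      have h2 := hk _ (Set.mem_insert_of_mem _ rfl)
      rcases of_a_le h1 with rfl | rfl
      · exact h2.elim
      · exact le_refl' _
    · exfalso
      have hub : RelUpperBound TreeALe A TreeA.a := by
        intro x hx
        cases x with
        | bot => trivial
        | a => trivial
        | top => exact absurd hx htop
        | node σ => exact absurd ⟨σ, hx⟩ hnode
      exact hA.2 _ hub
  · set S : Set (List ℕ) := {l | ∃ h : l ∈ T, TreeA.node ⟨l, h⟩ ∈ A} with hSdef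
    have hST : S ⊆ T := fun l hl => hl.1
    have hchain : ∀ l ∈ S, ∀ l' ∈ S, l <+: l' ∨ l' <+: l := by
      rintro l ⟨hl1, hl2⟩ l' ⟨hl1', hl2'⟩
      by_contra hc
      push_neg at hc
      exact hpair ⟨⟨l, hl1⟩, ⟨l', hl1'⟩, hl2, hl2', hc.1, hc.2⟩
    have hSfin : S.Finite := by
      by_contra hinf
      exact hnp (path_of_chain hT S hST hchain hinf)
    rcases S.eq_empty_or_nonempty with hS0 | hSne
    · exfalso
      have hub : RelUpperBound TreeALe A TreeA.bot := by
        intro x hx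
        cases x with
        | bot => trivial
        | top => exact absurd hx htop
        | a => exact absurd hx ha
        | node σ =>
          exfalso
          have : σ.1 ∈ S := ⟨σ.2, hx⟩
          rw [hS0] at this
          exact this
      exact hA.2 _ hub
    · exfalso
      obtain ⟨μ, hμ, hmax'⟩ := Set.Finite.exists_maximalFor List.length S hSfin hSne
      have hmax : ∀ a' ∈ S, μ.length ≤ a'.length → μ.length = a'.length :=
        fun a' ha h => le_antisymm h (hmax' ha h)
      obtain ⟨hμT, hμA⟩ := hμ
      have hub : RelUpperBound TreeALe A (TreeA.node ⟨μ, hμT⟩) := by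
        intro x hx
        cases x with
        | bot => trivial
        | top => exact absurd hx htop
        | a => exact absurd hx ha
        | node σ =>
          have hσS : σ.1 ∈ S := ⟨σ.2, hx⟩
          rcases hchain σ.1 hσS μ ⟨hμT, hμA⟩ with h | h
          · exact h
          · have he := h.eq_of_length (hmax σ.1 hσS h.length_le)
            show σ.1 <+: μ
            rw [he]
      exact hA.2 _ hub

lemma all_compact (hT : IsTree T) (hnp : ¬ ∃ f : ℕ → ℕ, IsPath T f) (c : TreeA T) :
    RelIsCompact (TreeALe (T := T)) c := by
  intro A j hA hcj
  by_cases hj : j = TreeA.top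
  · subst hj
    obtain ⟨A', hsub, hfin, hlub⟩ := top_lub_finite hT hnp A hA
    exact ⟨A', hsub, hfin, TreeA.top, hlub, le_top' c⟩
  · have hAfin : A.Finite := (below_finite j hj).subset (fun x hx => hA.1 x hx)
    exact ⟨A, Set.Subset.refl A, hAfin, j, hA, hcj⟩

end TreeAProof

open TreeAProof in
/-- The complete lattice `T[a]` is compactly generated (every element is the supremum
of the compact elements below it) — equivalently, `T[a]` is an algebraic lattice —
if and only if `T` has no infinite path. -/
theorem TreeA_algebraic_iff_no_path (T : Set (List ℕ)) (hT : IsTree T) (hne : [] ∈ T) :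
    (∀ x : TreeA T,
        RelIsLUB TreeALe {c : TreeA T | RelIsCompact (TreeALe (T := T)) c ∧ TreeALe c x} x) ↔
      ¬ ∃ f : ℕ → ℕ, IsPath T f := by
  constructor
  · intro h
    rintro ⟨f, hf⟩
    -- the chain of initial segments of the path
    set g : ℕ → TreeA T := fun k => TreeA.node ⟨(List.range k).map f, hf k⟩ with hg
    set A : Set (TreeA T) := Set.range g with hAdef
    have hlubA : RelIsLUB TreeALe A TreeA.top := by
      refine ⟨fun x _ => le_top' x, fun k hk => ?_⟩
      cases k with
      | top => trivial
      | bot => exact (hk _ ⟨0, rfl⟩).elim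
      | a => exact (hk _ ⟨0, rfl⟩).elim
      | node τ =>
        exfalso
        have h2 : ((List.range (τ.1.length + 1)).map f) <+: τ.1 := hk _ ⟨τ.1.length + 1, rfl⟩
        have := h2.length_le
        simp at this
    -- `a` is not compact
    have hanc : ¬ RelIsCompact (TreeALe (T := T)) (TreeA.a : TreeA T) := by
      intro hc
      obtain ⟨A', hsub, hfin, j', hj', haj'⟩ := hc A TreeA.top hlubA trivial
      rcases of_a_le haj' with rfl | rfl
      · rcases A'.eq_empty_or_nonempty with rfl | ⟨x, hx⟩
        · exact hj'.2 TreeA.bot (fun y hy => absurd hy (Set.notMem_empty y))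
        · obtain ⟨kx, hkx⟩ := hsub hx
          have hxa := hj'.1 x hx
          rw [← hkx] at hxa
          exact hxa
      · rcases A'.eq_empty_or_nonempty with rfl | ⟨x0, hx0⟩
        · exact hj'.2 TreeA.bot (fun y hy => absurd hy (Set.notMem_empty y))
        · -- A' is a finite nonempty set of chain elements; take a maximal one
          set len : TreeA T → ℕ := fun y => match y with
            | TreeA.node σ => σ.1.length
            | _ => 0 with hlen
          obtain ⟨x, hxA', hmax'⟩ := Set.Finite.exists_maximalFor len A' hfin ⟨x0, hx0⟩
          have hmax : ∀ a' ∈ A', len x ≤ len a' → len x = len a' :=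
            fun a' ha h => le_antisymm h (hmax' ha h)
          obtain ⟨m, hm⟩ := hsub hxA'
          have hub : RelUpperBound TreeALe A' (g m) := by
            intro y hy
            obtain ⟨k, hk⟩ := hsub hy
            have hlenk : len y = k := by rw [← hk]; simp [hlen, hg]
            have hlenm : len x = m := by rw [← hm]; simp [hlen, hg]
            have hkm : k ≤ m := by
              by_contra hc2
              push_neg at hc2
              have := hmax y hy (by omega)
              omega
            rw [← hk]
            show (List.range k).map f <+: (List.range m).map f
            refine List.IsPrefix.map f ?_
            have : (List.range m).take k = List.range k := by
              rw [List.take_range]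
              simp [Nat.min_eq_left hkm]
            rw [← this]
            exact List.take_prefix k (List.range m)
          exact hj'.2 (g m) hub
    -- `bot` is an upper bound of the compacts below `a`, so `a ≤ bot`: contradiction
    have hub : RelUpperBound TreeALe
        {c : TreeA T | RelIsCompact (TreeALe (T := T)) c ∧ TreeALe c TreeA.a} TreeA.bot := by
      rintro c ⟨hc, hca⟩
      rcases of_le_a hca with rfl | rfl
      · trivial
      · exact absurd hc hanc
    exact (h TreeA.a).2 TreeA.bot hub
  · intro hnp x
    refine ⟨fun c hc => hc.2, fun k hk => ?_⟩
    exact hk x ⟨all_compact hT hnp x, le_refl' x⟩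
end
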